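/- arXiv:2411.18458 — 4 statements merged into one kernel-verified Lean document; each statement's English description precedes it below -/
import Mathlib

section
/- Let d ≥ 3 and let V be a B∞ potential with constant C₀. Then for every q ∈ (1, ∞) there exists a constant C > 0, depending only on d, q and C₀, such that for every x ∈ ℝ^d and all radii 0 < r ≤ R < ∞ one has ψ(x, r) ≤ C (r/R)^{2 − d/q} ψ(x, R). -/
open MeasureTheory Metric Set

noncomputable section

/-- `ℝ^d` as Euclidean space. -/
abbrev Ed (d : ℕ) := EuclideanSpace ℝ (Fin d)

/-- The `B_∞` condition with constant `C₀`:
`ess sup_B V ≤ C₀ ⨍_B V` for every ball `B ⊆ ℝ^d`. -/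
def BInfty (d : ℕ) (C₀ : ℝ) (V : Ed d → ℝ) : Prop :=
  ∀ (x : Ed d) (r : ℝ), 0 < r →
    ∀ᵐ y ∂(volume.restrict (ball x r)), V y ≤ C₀ * ⨍ z in ball x r, V z

/-- `ψ(x,r) = r^{2-d} ∫_{B(x,r)} V`. -/
def psiFun (d : ℕ) (V : Ed d → ℝ) (x : Ed d) (r : ℝ) : ℝ :=
  r ^ ((2 : ℝ) - d) * ∫ y in ball x r, V y

/-- "Good potential": measurable, locally bounded, positive a.e., `B_∞` with constant `C₀`. -/
def GoodV (d : ℕ) (C₀ : ℝ) (V : Ed d → ℝ) : Prop :=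
  Measurable V ∧ (∀ x : Ed d, ∃ r > 0, ∃ K : ℝ, ∀ y ∈ ball x r, |V y| ≤ K) ∧
    (∀ᵐ x : Ed d ∂volume, 0 < V x) ∧ BInfty d C₀ V

/-- for every `q ∈ (1,∞)` there is `C = C(d,q,C₀) > 0` with
`ψ(x,r) ≤ C (r/R)^{2-d/q} ψ(x,R)` for all `x` and `0 < r ≤ R`. -/
theorem stmt0 (d : ℕ) (hd : 3 ≤ d) (C₀ : ℝ) (hC₀ : 0 < C₀) (q : ℝ) (hq : 1 < q) :
    ∃ C > 0, ∀ V : Ed d → ℝ, GoodV d C₀ V →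
      ∀ (x : Ed d) (r R : ℝ), 0 < r → r ≤ R →
        psiFun d V x r ≤ C * (r / R) ^ ((2 : ℝ) - d / q) * psiFun d V x R := by
  refine ⟨C₀, hC₀, ?_⟩
  intro V hV x r R hr hrR
  haveI : Nonempty (Fin d) := ⟨⟨0, by omega⟩⟩
  haveI : Nontrivial (Ed d) := inferInstance
  obtain ⟨hVmeas, -, hVpos, hBinf⟩ := hV
  have hR : 0 < R := lt_of_lt_of_le hr hrR
  set M : ℝ := C₀ * ⨍ z in ball x R, V z with hMdef
  have hub : ∀ᵐ y ∂(volume.restrict (ball x R)), V y ≤ M := hBinf x R hR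
  have hpos' : ∀ᵐ y ∂(volume.restrict (ball x R)), 0 < V y := ae_restrict_of_ae hVpos
  have hIR : 0 ≤ ∫ y in ball x R, V y :=
    integral_nonneg_of_ae (hpos'.mono fun y h => h.le)
  have hint : IntegrableOn V (ball x R) := by
    refine Integrable.mono' ((integrableOn_const measure_ball_lt_top.ne : IntegrableOn (fun _ => M) (ball x R) volume))
      hVmeas.aestronglyMeasurable.restrict ?_
    filter_upwards [hub, hpos'] with y h1 h2
    rw [Real.norm_eq_abs]; rwa [abs_of_pos h2]
  have hintr : IntegrableOn V (ball x r) := hint.mono_set (ball_subset_ball hrR)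
  have hubr : ∀ᵐ y ∂(volume.restrict (ball x r)), V y ≤ M :=
    ae_restrict_of_ae_restrict_of_subset (ball_subset_ball hrR) hub
  have h1 : ∫ y in ball x r, V y ≤ (volume (ball x r)).toReal * M := by
    calc ∫ y in ball x r, V y ≤ ∫ _ in ball x r, M :=
          integral_mono_ae hintr ((integrableOn_const measure_ball_lt_top.ne : IntegrableOn (fun _ => M) (ball x r) volume)) hubr
      _ = (volume (ball x r)).toReal * M := by rw [setIntegral_const, smul_eq_mul, measureReal_def]
  -- volumes
  set κ : ℝ := (volume (ball (0 : Ed d) 1)).toReal with hκdef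
  have hκpos : 0 < κ := by
    apply ENNReal.toReal_pos (measure_ball_pos _ _ one_pos).ne' measure_ball_lt_top.ne
  have hvol : ∀ ρ : ℝ, 0 < ρ → (volume (ball x ρ)).toReal = ρ ^ (d : ℝ) * κ := by
    intro ρ hρ
    rw [Measure.addHaar_ball volume x hρ.le, ENNReal.toReal_mul,
      ENNReal.toReal_ofReal (pow_nonneg hρ.le _), finrank_euclideanSpace_fin,
      ← Real.rpow_natCast ρ d]
  have havg : (⨍ z in ball x R, V z) = ((R ^ (d:ℝ) * κ))⁻¹ * ∫ y in ball x R, V y := by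
    rw [setAverage_eq, smul_eq_mul, measureReal_def, hvol R hR]
  -- positivity facts
  have hrR1 : r / R ≤ 1 := (div_le_one hR).2 hrR
  have hrRpos : 0 < r / R := div_pos hr hR
  have hψR : 0 ≤ R ^ ((2:ℝ) - d) * ∫ y in ball x R, V y :=
    mul_nonneg (Real.rpow_nonneg hR.le _) hIR
  have key : r ^ ((2:ℝ) - d) * ((r ^ (d:ℝ) * κ) * M)
      = C₀ * (r / R) ^ ((2:ℝ)) * (R ^ ((2:ℝ) - d) * ∫ y in ball x R, V y) := by
    have e1 : r ^ ((2:ℝ) - d) * r ^ (d:ℝ) = r ^ (2:ℝ) := by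
      rw [← Real.rpow_add hr]; ring_nf
    have e2 : R ^ ((2:ℝ) - d) = R ^ (2:ℝ) * (R ^ (d:ℝ))⁻¹ := by
      rw [← Real.rpow_neg hR.le, ← Real.rpow_add hR]; ring_nf
    have e3 : (r / R) ^ ((2:ℝ)) = r ^ (2:ℝ) * (R ^ (2:ℝ))⁻¹ := by
      rw [Real.div_rpow hr.le hR.le, div_eq_mul_inv]
    have hRd : (R:ℝ) ^ (d:ℝ) ≠ 0 := (Real.rpow_pos_of_pos hR _).ne'
    have hRd2 : (R:ℝ) ^ (2:ℝ) ≠ 0 := (Real.rpow_pos_of_pos hR _).ne'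
    set I := ∫ y in ball x R, V y
    rw [hMdef, havg, e2, e3, mul_inv,
      show r ^ ((2:ℝ) - d) * (r ^ (d:ℝ) * κ * (C₀ * ((R ^ ((d:ℝ)))⁻¹ * κ⁻¹ * I)))
        = (r ^ ((2:ℝ) - d) * r ^ (d:ℝ)) * (κ * (C₀ * ((R ^ ((d:ℝ)))⁻¹ * κ⁻¹ * I))) from by ring,
      e1]
    field_simp
  have hexp : (r / R) ^ ((2:ℝ)) ≤ (r / R) ^ ((2:ℝ) - d / q) := by
    apply Real.rpow_le_rpow_of_exponent_ge hrRpos hrR1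
    have : 0 ≤ (d : ℝ) / q := div_nonneg (Nat.cast_nonneg d) (le_of_lt (lt_trans one_pos hq))
    linarith
  calc psiFun d V x r = r ^ ((2:ℝ) - d) * ∫ y in ball x r, V y := rfl
    _ ≤ r ^ ((2:ℝ) - d) * ((volume (ball x r)).toReal * M) := by
        apply mul_le_mul_of_nonneg_left h1 (Real.rpow_nonneg hr.le _)
    _ = C₀ * (r / R) ^ ((2:ℝ)) * (R ^ ((2:ℝ) - d) * ∫ y in ball x R, V y) := by
        rw [hvol r hr]; exact key
    _ ≤ C₀ * (r / R) ^ ((2:ℝ) - d / q) * (R ^ ((2:ℝ) - d) * ∫ y in ball x R, V y) := by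
        apply mul_le_mul_of_nonneg_right _ hψR
        exact mul_le_mul_of_nonneg_left hexp hC₀.le
    _ = C₀ * (r / R) ^ ((2:ℝ) - d / q) * psiFun d V x R := rfl
end
end

section
/- Let d ≥ 3 and let V be a B∞ potential with constant C₀ which is not almost everywhere zero. Then for every x ∈ ℝ^d one has 0 < m(x,V) < ∞, and there exists a constant C > 0, depending only on d and C₀, such that V(x) ≤ C m(x,V)² for almost every x ∈ ℝ^d. -/
open MeasureTheory Metric Set

noncomputable section

/-- The Fefferman–Phong–Shen maximal function
`m(x,V) = inf { 1/r : r > 0, ψ(x,r) ≤ 1 }`. -/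
def mFun (d : ℕ) (V : Ed d → ℝ) (x : Ed d) : ℝ :=
  sInf {s : ℝ | ∃ r : ℝ, 0 < r ∧ s = 1 / r ∧ psiFun d V x r ≤ 1}

namespace Stmt1Aux

/-- Local boundedness gives integrability on every ball. -/
lemma integrableOn_ball (d : ℕ) {V : Ed d → ℝ} (hm : Measurable V)
    (hloc : ∀ x : Ed d, ∃ r > 0, ∃ K : ℝ, ∀ y ∈ ball x r, |V y| ≤ K)
    (x : Ed d) (R : ℝ) : IntegrableOn V (ball x R) := by
  obtain ⟨r, hr, K, hK⟩ : ∃ r : Ed d → ℝ, (∀ z, 0 < r z) ∧ ∃ K : Ed d → ℝ,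
      ∀ z, ∀ y ∈ ball z (r z), |V y| ≤ K z := by
    choose r hr K hK using hloc
    exact ⟨r, hr, K, hK⟩
  obtain ⟨t, -, ht⟩ := (isCompact_closedBall x R).elim_nhds_subcover
    (fun z => ball z (r z)) (fun z _ => ball_mem_nhds z (hr z))
  set M : ℝ := ∑ z ∈ t, max (K z) 0 with hM
  have hbd : ∀ y ∈ closedBall x R, ‖V y‖ ≤ M := by
    intro y hy
    obtain ⟨z, hz, hyz⟩ := mem_iUnion₂.1 (ht hy)
    calc ‖V y‖ = |V y| := Real.norm_eq_abs _
      _ ≤ K z := hK z y hyz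
      _ ≤ max (K z) 0 := le_max_left _ _
      _ ≤ M := Finset.single_le_sum (f := fun z => max (K z) 0)
          (fun i _ => le_max_right _ _) hz
  have h1 : IntegrableOn V (closedBall x R) :=
    Measure.integrableOn_of_bounded (isCompact_closedBall x R).measure_lt_top.ne
      hm.aestronglyMeasurable
      ((ae_restrict_iff' measurableSet_closedBall).2 (ae_of_all _ hbd))
  exact h1.mono_set ball_subset_closedBall

/-- Volume of a Euclidean ball. -/
lemma vol_ball (d : ℕ) (hd : 1 ≤ d) (x : Ed d) {r : ℝ} (hr : 0 ≤ r) :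
    (volume (ball x r)).toReal = r ^ d * (volume (ball (0 : Ed d) 1)).toReal := by
  haveI : Nontrivial (Ed d) :=
    Module.nontrivial_of_finrank_pos (R := ℝ) (by rw [finrank_euclideanSpace_fin]; omega)
  rw [Measure.addHaar_ball volume x hr, finrank_euclideanSpace_fin,
    ENNReal.toReal_mul, ENNReal.toReal_ofReal (pow_nonneg hr d)]

lemma cd_pos (d : ℕ) : 0 < (volume (ball (0 : Ed d) 1)).toReal :=
  ENNReal.toReal_pos (measure_ball_pos volume _ one_pos).ne' measure_ball_lt_top.ne

/-- The key `B_∞` comparison for integrals over concentric balls. -/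
lemma key (d : ℕ) (hd : 1 ≤ d) {C₀ : ℝ} {V : Ed d → ℝ}
    (hB : BInfty d C₀ V) (hintr : ∀ x R, IntegrableOn V (ball x R))
    (x : Ed d) {r R : ℝ} (hr : 0 < r) (hrR : r ≤ R) :
    ∫ y in ball x r, V y ≤ C₀ * (r / R) ^ d * ∫ y in ball x R, V y := by
  have hR : 0 < R := hr.trans_le hrR
  set A := C₀ * ⨍ z in ball x R, V z with hA
  have h2 : ∀ᵐ y ∂volume.restrict (ball x r), V y ≤ A :=
    ae_restrict_of_ae_restrict_of_subset (ball_subset_ball hrR) (hB x R hR)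
  have hconst : IntegrableOn (fun _ => A) (ball x r) :=
    integrableOn_const measure_ball_lt_top.ne
  have h3 : ∫ y in ball x r, V y ≤ ∫ _ in ball x r, A :=
    integral_mono_ae (hintr x r) hconst h2
  rw [setIntegral_const, smul_eq_mul, measureReal_def] at h3
  have hcd := cd_pos d
  have hvolR : 0 < (volume (ball x R)).toReal := by
    rw [vol_ball d hd x hR.le]; positivity
  have heq : (volume (ball x r)).toReal * A
      = C₀ * (r / R) ^ d * ∫ y in ball x R, V y := by
    rw [hA, setAverage_eq, smul_eq_mul, measureReal_def, vol_ball d hd x hr.le, vol_ball d hd x hR.le]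
    field_simp
    have hRd : R ^ d * R⁻¹ ^ d = 1 := by rw [← mul_pow, mul_inv_cancel₀ hR.ne', one_pow]
    linear_combination (-(r ^ d * C₀ * ∫ y in ball x R, V y)) * hRd
  linarith [h3, heq.le, heq.ge]

/-- If `ψ(x,r) ≤ 1` then the integral over the ball is at most `r^(d-2)`. -/
lemma int_le_of_psi (d : ℕ) {V : Ed d → ℝ} {x : Ed d} {r : ℝ} (hr : 0 < r)
    (hψ : psiFun d V x r ≤ 1) : ∫ y in ball x r, V y ≤ r ^ ((d : ℝ) - 2) := by
  have h := mul_le_mul_of_nonneg_left hψ (Real.rpow_pos_of_pos hr ((d : ℝ) - 2)).le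
  rwa [psiFun, ← mul_assoc, ← Real.rpow_add hr,
    (by ring : (d : ℝ) - 2 + (2 - d) = 0), Real.rpow_zero, one_mul, mul_one] at h

/-- `(1/r)^d * r^(d-2) = (1/r)^2`. -/
lemma pow_cancel {r : ℝ} (hr : 0 < r) (d : ℕ) :
    ((1 : ℝ) / r) ^ d * r ^ ((d : ℝ) - 2) = (1 / r) ^ 2 := by
  have e1 : ((1 : ℝ) / r) ^ d = r ^ (-(d : ℝ)) := by
    rw [Real.rpow_neg hr.le, Real.rpow_natCast, one_div, inv_pow]
  have e2 : r ^ (-(d : ℝ)) * r ^ ((d : ℝ) - 2) = r ^ (-(2 : ℝ)) := by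
    rw [← Real.rpow_add hr, show -(d : ℝ) + ((d : ℝ) - 2) = -2 by ring]
  have e3 : r ^ (-(2 : ℝ)) = (1 / r) ^ 2 := by
    rw [Real.rpow_neg hr.le, Real.rpow_two, one_div, inv_pow]
  rw [e1, e2, e3]

/-- Positivity of integrals of `V` over balls. -/
lemma int_pos (d : ℕ) {V : Ed d → ℝ} (hpos : ∀ᵐ x : Ed d ∂volume, 0 < V x)
    (hintr : ∀ x R, IntegrableOn V (ball x R)) (x : Ed d) {R : ℝ} (hR : 0 < R) :
    0 < ∫ y in ball x R, V y := by
  have h0 : 0 ≤ᵐ[volume.restrict (ball x R)] V :=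
    ae_restrict_of_ae (hpos.mono fun x h => h.le)
  rcases (integral_nonneg_of_ae h0).lt_or_eq with h | h
  · exact h
  · exfalso
    have hz : V =ᵐ[volume.restrict (ball x R)] 0 :=
      (integral_eq_zero_iff_of_nonneg_ae h0 (hintr x R)).1 h.symm
    have hp : ∀ᵐ y ∂volume.restrict (ball x R), 0 < V y := ae_restrict_of_ae hpos
    have : ∀ᵐ _ ∂volume.restrict (ball x R), False := by
      filter_upwards [hz, hp] with y h1 h2
      simp [h1] at h2
    have h4 : volume.restrict (ball x R) univ = 0 := by
      simpa [ae_iff] using this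
    rw [Measure.restrict_apply_univ] at h4
    exact (measure_ball_pos volume x hR).ne' h4

/-- Lebesgue points: a.e. `x` satisfies `V x ≤ C₀ ⨍_{B(x,r)} V` for all `r > 0`. -/
lemma ae_le_avg (d : ℕ) {C₀ : ℝ} {V : Ed d → ℝ}
    (hB : BInfty d C₀ V) (hintr : ∀ x R, IntegrableOn V (ball x R)) :
    ∀ᵐ x : Ed d ∂volume, ∀ r : ℝ, 0 < r → V x ≤ C₀ * ⨍ z in ball x r, V z := by
  have hli : LocallyIntegrable V volume := by
    rw [locallyIntegrable_iff]
    intro K hK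
    obtain ⟨R, hKR⟩ := hK.isBounded.subset_closedBall (0 : Ed d)
    exact (hintr 0 (R + 1)).mono_set
      (hKR.trans (closedBall_subset_ball (by linarith)))
  filter_upwards [IsUnifLocDoublingMeasure.ae_tendsto_average (μ := volume) hli 1] with x hx
  intro r hr
  have hT : Filter.Tendsto (fun s : ℝ => ⨍ y in closedBall x s, V y)
      (nhdsWithin 0 (Ioi 0)) (nhds (V x)) := by
    refine hx (fun _ => x) id Filter.tendsto_id ?_
    filter_upwards [self_mem_nhdsWithin] with s hs
    exact mem_closedBall_self (by simpa using (le_of_lt hs))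
  refine le_of_tendsto hT ?_
  filter_upwards [Ioo_mem_nhdsGT_of_mem (Set.left_mem_Ico.2 hr)] with s hs
  set A := C₀ * ⨍ z in ball x r, V z with hA
  have h2 : ∀ᵐ y ∂volume.restrict (closedBall x s), V y ≤ A :=
    ae_restrict_of_ae_restrict_of_subset (closedBall_subset_ball hs.2) (hB x r hr)
  have hconst : IntegrableOn (fun _ => A) (closedBall x s) :=
    integrableOn_const measure_closedBall_lt_top.ne
  have h3 : ∫ y in closedBall x s, V y ≤ ∫ _ in closedBall x s, A :=
    integral_mono_ae ((hintr x r).mono_set (closedBall_subset_ball hs.2)) hconst h2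
  rw [setIntegral_const, smul_eq_mul, measureReal_def] at h3
  have hvpos : 0 < (volume (closedBall x s)).toReal :=
    ENNReal.toReal_pos (measure_closedBall_pos volume x hs.1).ne'
      measure_closedBall_lt_top.ne
  rw [setAverage_eq, smul_eq_mul, measureReal_def, inv_mul_le_iff₀ hvpos]
  linarith [h3]

end Stmt1Aux

/-- `0 < m(x,V) < ∞` for all `x` (finiteness being expressed by
nonemptiness of the defining set), and `V(x) ≤ C m(x,V)²` a.e., with `C = C(d,C₀)`. -/
theorem stmt1 (d : ℕ) (hd : 3 ≤ d) (C₀ : ℝ) (hC₀ : 0 < C₀) :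
    ∃ C > 0, ∀ V : Ed d → ℝ, GoodV d C₀ V → ¬ (V =ᵐ[volume] 0) →
      (∀ x : Ed d, (∃ r > 0, psiFun d V x r ≤ 1) ∧ 0 < mFun d V x) ∧
      (∀ᵐ x : Ed d ∂volume, V x ≤ C * (mFun d V x) ^ 2) := by
  classical
  have hd1 : 1 ≤ d := by omega
  set cd : ℝ := (volume (ball (0 : Ed d) 1)).toReal with hcddef
  have hcd : 0 < cd := Stmt1Aux.cd_pos d
  refine ⟨4 * C₀ / cd, by positivity, ?_⟩
  intro V hV _hV0
  obtain ⟨hm, hloc, hpos, hB⟩ := hV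
  have hintr : ∀ x R, IntegrableOn V (ball x R) :=
    Stmt1Aux.integrableOn_ball d hm hloc
  -- Part 1a: existence of an admissible radius
  have hex : ∀ x : Ed d, ∃ r > 0, psiFun d V x r ≤ 1 := by
    intro x
    obtain ⟨r₀, hr₀, K, hK⟩ := hloc x
    have hKnn : 0 ≤ K := by
      haveI : Nontrivial (Ed d) := Module.nontrivial_of_finrank_pos (R := ℝ)
        (by rw [finrank_euclideanSpace_fin]; omega)
      obtain ⟨y, hy⟩ : (ball x r₀).Nonempty := nonempty_ball.2 hr₀
      exact (abs_nonneg _).trans (hK y hy)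
    set M : ℝ := max (K * cd) 1 with hM
    have hM1 : (1 : ℝ) ≤ M := le_max_right _ _
    have hMpos : (0 : ℝ) < M := by linarith
    set r : ℝ := min r₀ (1 / Real.sqrt M) with hrdef
    have hrpos : 0 < r := lt_min hr₀ (by positivity)
    refine ⟨r, hrpos, ?_⟩
    have hsub : ball x r ⊆ ball x r₀ := ball_subset_ball (min_le_left _ _)
    have hI : ∫ y in ball x r, V y ≤ K * (volume (ball x r)).toReal := by
      have : ∫ y in ball x r, V y ≤ ∫ _ in ball x r, K := by
        refine integral_mono_ae (hintr x r)
          (integrableOn_const measure_ball_lt_top.ne) ?_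
        refine (ae_restrict_iff' measurableSet_ball).2 (ae_of_all _ fun y hy => ?_)
        exact (le_abs_self _).trans (hK y (hsub hy))
      rwa [setIntegral_const, smul_eq_mul, measureReal_def, mul_comm] at this
    have hvol := Stmt1Aux.vol_ball d hd1 x hrpos.le
    have hrp : (0 : ℝ) < r ^ ((2 : ℝ) - d) := Real.rpow_pos_of_pos hrpos _
    have hpow : r ^ ((2 : ℝ) - d) * r ^ d = r ^ 2 := by
      rw [← Real.rpow_natCast r d, ← Real.rpow_add hrpos, sub_add_cancel, Real.rpow_two]
    have hr2 : r ^ 2 ≤ 1 / M := by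
      have h1 : r ≤ 1 / Real.sqrt M := min_le_right _ _
      have h2 : r ^ 2 ≤ (1 / Real.sqrt M) ^ 2 := by
        exact pow_le_pow_left₀ hrpos.le h1 2
      have h3 : (1 / Real.sqrt M) ^ 2 = 1 / M := by
        rw [div_pow, one_pow, Real.sq_sqrt hMpos.le]
      linarith
    calc psiFun d V x r ≤ r ^ ((2 : ℝ) - d) * (K * (volume (ball x r)).toReal) := by
          exact mul_le_mul_of_nonneg_left hI hrp.le
      _ = r ^ 2 * (K * cd) := by rw [hvol, ← hpow]; ring
      _ ≤ r ^ 2 * M := by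
          exact mul_le_mul_of_nonneg_left (le_max_left _ _) (sq_nonneg r)
      _ ≤ (1 / M) * M := by
          exact mul_le_mul_of_nonneg_right hr2 hMpos.le
      _ = 1 := by field_simp
  -- admissible set
  set S : Ed d → Set ℝ :=
    fun x => {s : ℝ | ∃ r : ℝ, 0 < r ∧ s = 1 / r ∧ psiFun d V x r ≤ 1} with hS
  have hSne : ∀ x, (S x).Nonempty := by
    intro x
    obtain ⟨r, hr, hψ⟩ := hex x
    exact ⟨1 / r, r, hr, rfl, hψ⟩
  -- Part 1b: positivity of mFun
  have hmpos : ∀ x : Ed d, 0 < mFun d V x := by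
    intro x
    have hI1 : 0 < ∫ y in ball x 1, V y := Stmt1Aux.int_pos d hpos hintr x one_pos
    set Rmax : ℝ := max 1 (Real.sqrt (C₀ / ∫ y in ball x 1, V y)) with hRmax
    have hRmaxpos : (0 : ℝ) < Rmax := lt_of_lt_of_le one_pos (le_max_left _ _)
    have hb : ∀ s ∈ S x, 1 / Rmax ≤ s := by
      rintro s ⟨r, hr, rfl, hψ⟩
      have hrle : r ≤ Rmax := by
        rcases le_or_gt r 1 with h | h
        · exact h.trans (le_max_left _ _)
        · have hkey := Stmt1Aux.key d hd1 hB hintr x one_pos h.le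
          have hIr : ∫ y in ball x r, V y ≤ r ^ ((d : ℝ) - 2) :=
            Stmt1Aux.int_le_of_psi d hr hψ
          have hC0r : (0 : ℝ) < C₀ * (1 / r) ^ d := by positivity
          have h5 : ∫ y in ball x 1, V y ≤ C₀ * (1 / r) ^ d * r ^ ((d : ℝ) - 2) := by
            calc ∫ y in ball x 1, V y ≤ C₀ * (1 / r) ^ d * ∫ y in ball x r, V y := hkey
              _ ≤ C₀ * (1 / r) ^ d * r ^ ((d : ℝ) - 2) :=
                  mul_le_mul_of_nonneg_left hIr hC0r.le
          have hrpos : (0 : ℝ) < r := hr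
          have hsimp : C₀ * (1 / r) ^ d * r ^ ((d : ℝ) - 2) = C₀ / r ^ 2 := by
            rw [mul_assoc, Stmt1Aux.pow_cancel hrpos d]; ring
          rw [hsimp] at h5
          have hr2 : r ^ 2 ≤ C₀ / ∫ y in ball x 1, V y := by
            rw [le_div_iff₀ hI1]
            rw [le_div_iff₀ (by positivity : (0:ℝ) < r ^ 2)] at h5
            linarith
          have : r ≤ Real.sqrt (C₀ / ∫ y in ball x 1, V y) := by
            have := Real.sqrt_le_sqrt hr2
            rwa [Real.sqrt_sq hrpos.le] at this
          exact this.trans (le_max_right _ _)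
      exact one_div_le_one_div_of_le hr hrle
    have : 1 / Rmax ≤ mFun d V x := le_csInf (hSne x) hb
    have h0 : (0 : ℝ) < 1 / Rmax := by positivity
    linarith
  refine ⟨fun x => ⟨hex x, hmpos x⟩, ?_⟩
  -- Part 2
  filter_upwards [Stmt1Aux.ae_le_avg d hB hintr] with x hx
  set m : ℝ := mFun d V x with hmdef
  have hm : 0 < m := hmpos x
  have hlt : mFun d V x < 2 * m := by rw [← hmdef]; linarith
  obtain ⟨s, hsS, hslt⟩ := exists_lt_of_csInf_lt (hSne x) hlt
  obtain ⟨r, hr, rfl, hψ⟩ := hsS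
  have hIr : ∫ y in ball x r, V y ≤ r ^ ((d : ℝ) - 2) :=
    Stmt1Aux.int_le_of_psi d hr hψ
  have havg : V x ≤ C₀ * ⨍ z in ball x r, V z := hx r hr
  have hvol := Stmt1Aux.vol_ball d hd1 x hr.le
  have hvolpos : 0 < (volume (ball x r)).toReal := by rw [hvol]; positivity
  have h6 : C₀ * ⨍ z in ball x r, V z ≤ C₀ / cd * (1 / r) ^ 2 := by
    rw [setAverage_eq, smul_eq_mul, measureReal_def]
    have h7 : (volume (ball x r)).toReal⁻¹ * ∫ z in ball x r, V z
        ≤ (volume (ball x r)).toReal⁻¹ * r ^ ((d : ℝ) - 2) :=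
      mul_le_mul_of_nonneg_left hIr (by positivity)
    have h8 : (volume (ball x r)).toReal⁻¹ * r ^ ((d : ℝ) - 2) = 1 / cd * (1 / r) ^ 2 := by
      have hinv : ((r : ℝ) ^ d)⁻¹ = ((1 : ℝ) / r) ^ d := by
        rw [one_div, inv_pow]
      rw [hvol, mul_inv, hinv, mul_comm (((1 : ℝ) / r) ^ d) cd⁻¹, mul_assoc,
        Stmt1Aux.pow_cancel hr d]
      ring
    rw [h8] at h7
    have h12 := mul_le_mul_of_nonneg_left h7 hC₀.le
    have h13 : C₀ * (1 / cd * (1 / r) ^ 2) = C₀ / cd * (1 / r) ^ 2 := by ring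
    linarith
  have h9 : (1 / r) ^ 2 ≤ (2 * m) ^ 2 := by
    have h10 : (0 : ℝ) < 1 / r := by positivity
    exact pow_le_pow_left₀ h10.le hslt.le 2
  have h11 : C₀ / cd * (1 / r) ^ 2 ≤ C₀ / cd * (2 * m) ^ 2 :=
    mul_le_mul_of_nonneg_left h9 (by positivity)
  calc V x ≤ C₀ * ⨍ z in ball x r, V z := havg
    _ ≤ C₀ / cd * (1 / r) ^ 2 := h6
    _ ≤ C₀ / cd * (2 * m) ^ 2 := h11
    _ = 4 * C₀ / cd * m ^ 2 := by ring
end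
end

section
/- Let d ≥ 3 and let V be a B∞ potential with constant C₀ which is not almost everywhere zero. Then for every x ∈ ℝ^d one has 0 < m(x,V) < ∞ and ψ(x, 1/m(x,V)) = 1. Moreover: (i) for all 0 < c₁ ≤ c₂ there exist constants 0 < c ≤ C, depending only on d, C₀, c₁, c₂, such that for every x ∈ ℝ^d and r > 0, if c₁ ≤ ψ(x,r) ≤ c₂ then c ≤ r·m(x,V) ≤ C; and (ii) for all 0 < C₁ ≤ C₂ there exist constants 0 < c₁′ ≤ c₂′, depending only on d, C₀, C₁, C₂, such that for every x ∈ ℝ^d and r > 0, if C₁ ≤ r·m(x,V) ≤ C₂ then c₁′ ≤ ψ(x,r) ≤ c₂′. -/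
open MeasureTheory Metric Set
open Filter Topology

noncomputable section

namespace S2

variable {d : ℕ}

lemma ntv (hd : 3 ≤ d) : Nontrivial (Ed d) :=
  Module.nontrivial_of_finrank_pos (R := ℝ)
    (by rw [finrank_euclideanSpace_fin]; omega)

lemma vol_ball (x : Ed d) {r : ℝ} (hr : 0 < r) :
    (volume (ball x r)).toReal = r ^ d * (volume (ball (0 : Ed d) 1)).toReal := by
  rw [Measure.addHaar_ball_of_pos _ x hr, ENNReal.toReal_mul,
    ENNReal.toReal_ofReal (by positivity), finrank_euclideanSpace_fin]

lemma cd_pos : 0 < (volume (ball (0 : Ed d) 1)).toReal :=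
  ENNReal.toReal_pos (measure_ball_pos _ _ one_pos).ne' (measure_ball_lt_top).ne

lemma vol_ball_pos (x : Ed d) {r : ℝ} (hr : 0 < r) : 0 < (volume (ball x r)).toReal :=
  ENNReal.toReal_pos (measure_ball_pos _ _ hr).ne' (measure_ball_lt_top).ne

variable {V : Ed d → ℝ}

lemma bdd_on_compact (hloc : ∀ x : Ed d, ∃ r > 0, ∃ K : ℝ, ∀ y ∈ ball x r, |V y| ≤ K)
    {s : Set (Ed d)} (hs : IsCompact s) : ∃ M : ℝ, ∀ y ∈ s, |V y| ≤ M := by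
  choose ρ hρ K hK using hloc
  obtain ⟨t, -, hcov⟩ := hs.elim_nhds_subcover (fun y => ball y (ρ y))
    (fun y _ => ball_mem_nhds y (hρ y))
  obtain ⟨M, hM⟩ := ((t : Set (Ed d)).toFinite.image K).bddAbove
  refine ⟨M, fun y hy => ?_⟩
  obtain ⟨c, hct, hyc⟩ := mem_iUnion₂.1 (hcov hy)
  exact (hK c y hyc).trans (hM (mem_image_of_mem K hct))

lemma intOn (hmeas : Measurable V)
    (hloc : ∀ x : Ed d, ∃ r > 0, ∃ K : ℝ, ∀ y ∈ ball x r, |V y| ≤ K)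
    (x : Ed d) (r : ℝ) : IntegrableOn V (ball x r) volume := by
  obtain ⟨M, hM⟩ := bdd_on_compact hloc (isCompact_closedBall x r)
  have h1 : IntegrableOn V (closedBall x r) volume :=
    Measure.integrableOn_of_bounded measure_closedBall_lt_top.ne hmeas.aestronglyMeasurable
      (ae_restrict_of_forall_mem measurableSet_closedBall fun y hy => hM y hy)
  exact h1.mono_set ball_subset_closedBall

lemma int_nonneg (hpos : ∀ᵐ z : Ed d ∂volume, 0 < V z) (x : Ed d) (r : ℝ) :
    0 ≤ ∫ y in ball x r, V y :=
  integral_nonneg_of_ae (ae_restrict_of_ae (hpos.mono fun _ h => h.le))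

lemma int_pos (hmeas : Measurable V)
    (hloc : ∀ x : Ed d, ∃ r > 0, ∃ K : ℝ, ∀ y ∈ ball x r, |V y| ≤ K)
    (hpos : ∀ᵐ z : Ed d ∂volume, 0 < V z) (x : Ed d) {r : ℝ} (hr : 0 < r) :
    0 < ∫ y in ball x r, V y := by
  rw [setIntegral_pos_iff_support_of_nonneg_ae
    (ae_restrict_of_ae (hpos.mono fun _ h => h.le)) (intOn hmeas hloc x r)]
  have h1 : volume (ball x r) ≤ volume (Function.support V ∩ ball x r) :=
    measure_mono_ae (hpos.mono fun z hz hzb => ⟨ne_of_gt hz, hzb⟩)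
  exact (measure_ball_pos _ _ hr).trans_le h1

lemma int_mono (hmeas : Measurable V)
    (hloc : ∀ x : Ed d, ∃ r > 0, ∃ K : ℝ, ∀ y ∈ ball x r, |V y| ≤ K)
    (hpos : ∀ᵐ z : Ed d ∂volume, 0 < V z) (x : Ed d) {a b : ℝ} (hab : a ≤ b) :
    ∫ y in ball x a, V y ≤ ∫ y in ball x b, V y :=
  setIntegral_mono_set (intOn hmeas hloc x b)
    (ae_restrict_of_ae (hpos.mono fun _ h => h.le))
    (HasSubset.Subset.eventuallyLE (ball_subset_ball hab))

lemma subset_bound {C₀ : ℝ}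
    (hB : ∀ (x : Ed d) (r : ℝ), 0 < r →
      ∀ᵐ y ∂(volume.restrict (ball x r)), V y ≤ C₀ * ⨍ z in ball x r, V z)
    (hmeas : Measurable V)
    (hloc : ∀ x : Ed d, ∃ r > 0, ∃ K : ℝ, ∀ y ∈ ball x r, |V y| ≤ K)
    (x : Ed d) {b : ℝ} (hb : 0 < b) {s : Set (Ed d)} (hs : MeasurableSet s)
    (hsub : s ⊆ ball x b) :
    ∫ y in s, V y ≤
      C₀ * ((volume s).toReal / (volume (ball x b)).toReal) * ∫ y in ball x b, V y := by
  have hae : ∀ᵐ y ∂(volume.restrict s), V y ≤ C₀ * ⨍ z in ball x b, V z :=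
    ae_restrict_of_ae_restrict_of_subset hsub (hB x b hb)
  have h1 : ∫ y in s, V y ≤ ∫ _ in s, (C₀ * ⨍ z in ball x b, V z) := by
    refine integral_mono_ae ((intOn hmeas hloc x b).mono_set hsub) ?_ hae
    exact integrableOn_const ((measure_mono hsub).trans_lt measure_ball_lt_top).ne
  rw [setIntegral_const, smul_eq_mul] at h1
  rw [setAverage_eq, smul_eq_mul] at h1
  calc ∫ y in s, V y ≤ (volume s).toReal *
      (C₀ * ((volume (ball x b)).toReal⁻¹ * ∫ z in ball x b, V z)) := h1
  _ = C₀ * ((volume s).toReal / (volume (ball x b)).toReal) * ∫ y in ball x b, V y := by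
      rw [div_eq_mul_inv]; ring

lemma rpow_two_sub {r : ℝ} (hr : 0 < r) : r ^ ((2:ℝ) - d) = r ^ 2 / r ^ d := by
  rw [Real.rpow_sub hr, show (2:ℝ) = ((2:ℕ):ℝ) from by norm_cast, Real.rpow_natCast,
    Real.rpow_natCast]

variable {C₀ : ℝ}

lemma growth
    (hB : ∀ (x : Ed d) (r : ℝ), 0 < r →
      ∀ᵐ y ∂(volume.restrict (ball x r)), V y ≤ C₀ * ⨍ z in ball x r, V z)
    (hmeas : Measurable V)
    (hloc : ∀ x : Ed d, ∃ r > 0, ∃ K : ℝ, ∀ y ∈ ball x r, |V y| ≤ K)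
    (x : Ed d) {a b : ℝ} (ha : 0 < a) (hab : a ≤ b) :
    (b/a)^2 * psiFun d V x a ≤ C₀ * psiFun d V x b := by
  have hb : 0 < b := ha.trans_le hab
  have hsub := subset_bound hB hmeas hloc x hb measurableSet_ball (ball_subset_ball hab)
  have hc : (volume (ball (0 : Ed d) 1)).toReal ≠ 0 := cd_pos.ne'
  have hrat : (volume (ball x a)).toReal / (volume (ball x b)).toReal = (a/b)^d := by
    rw [vol_ball x ha, vol_ball x hb, mul_div_mul_comm, div_self hc, mul_one, div_pow]
  rw [hrat] at hsub
  have e1 : psiFun d V x a = (a^2/a^d) * ∫ y in ball x a, V y := by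
    rw [psiFun, rpow_two_sub ha]
  have e2 : psiFun d V x b = (b^2/b^d) * ∫ y in ball x b, V y := by
    rw [psiFun, rpow_two_sub hb]
  rw [e1, e2]
  have ht : (0:ℝ) ≤ (b/a)^2 * (a^2 / a^d) := by positivity
  calc (b/a)^2 * ((a^2/a^d) * ∫ y in ball x a, V y)
      = ((b/a)^2 * (a^2/a^d)) * ∫ y in ball x a, V y := by ring
  _ ≤ ((b/a)^2 * (a^2/a^d)) * (C₀ * (a/b)^d * ∫ y in ball x b, V y) :=
      mul_le_mul_of_nonneg_left hsub ht
  _ = C₀ * ((b^2/b^d) * ∫ y in ball x b, V y) := by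
      field_simp
      linear_combination (C₀ * a^d * ∫ y in ball x b, V y) * inv_mul_cancel₀ (pow_ne_zero d hb.ne')

lemma step
    (hB : ∀ (x : Ed d) (r : ℝ), 0 < r →
      ∀ᵐ y ∂(volume.restrict (ball x r)), V y ≤ C₀ * ⨍ z in ball x r, V z)
    (hmeas : Measurable V)
    (hloc : ∀ x : Ed d, ∃ r > 0, ∃ K : ℝ, ∀ y ∈ ball x r, |V y| ≤ K)
    (hpos : ∀ᵐ z : Ed d ∂volume, 0 < V z)
    (x : Ed d) {a b : ℝ} (ha : 0 < a) (hab : a ≤ b)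
    (hθ : C₀ * (1 - (a/b)^d) ≤ 1/2) :
    ∫ y in ball x b, V y ≤ 2 * ∫ y in ball x a, V y := by
  have hb : 0 < b := ha.trans_le hab
  set s := ball x b \ ball x a with hs
  have hsub : s ⊆ ball x b := diff_subset
  have hms : MeasurableSet s := measurableSet_ball.diff measurableSet_ball
  have hsplit : ∫ y in ball x b, V y = (∫ y in ball x a, V y) + ∫ y in s, V y := by
    rw [← setIntegral_union disjoint_sdiff_right hms
      ((intOn hmeas hloc x b).mono_set (ball_subset_ball hab))
      ((intOn hmeas hloc x b).mono_set hsub),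
      union_diff_cancel (ball_subset_ball hab)]
  have hvol : (volume s).toReal / (volume (ball x b)).toReal = 1 - (a/b)^d := by
    have hd1 : volume s = volume (ball x b) - volume (ball x a) :=
      measure_diff (ball_subset_ball hab) measurableSet_ball.nullMeasurableSet
        measure_ball_lt_top.ne
    have hd2 : (volume s).toReal
        = (volume (ball x b)).toReal - (volume (ball x a)).toReal := by
      rw [hd1, ENNReal.toReal_sub_of_le (measure_mono (ball_subset_ball hab))
        measure_ball_lt_top.ne]
    rw [hd2, vol_ball x ha, vol_ball x hb]
    rw [div_eq_iff (mul_pos (pow_pos hb d) (cd_pos (d := d))).ne']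
    field_simp
    linear_combination ((volume (ball (0 : Ed d) 1)).toReal * a^d) * mul_inv_cancel₀ (pow_ne_zero d hb.ne')
  have hann := subset_bound hB hmeas hloc x hb hms hsub
  rw [hvol] at hann
  have h2 : ∫ y in s, V y ≤ (1/2) * ∫ y in ball x b, V y :=
    hann.trans (mul_le_mul_of_nonneg_right hθ (int_nonneg hpos x b))
  linarith

lemma iter
    (hB : ∀ (x : Ed d) (r : ℝ), 0 < r →
      ∀ᵐ y ∂(volume.restrict (ball x r)), V y ≤ C₀ * ⨍ z in ball x r, V z)
    (hmeas : Measurable V)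
    (hloc : ∀ x : Ed d, ∃ r > 0, ∃ K : ℝ, ∀ y ∈ ball x r, |V y| ≤ K)
    (hpos : ∀ᵐ z : Ed d ∂volume, 0 < V z)
    (x : Ed d) {θ : ℝ} (hθ0 : 0 < θ) (hθ1 : θ ≤ 1)
    (hθd : C₀ * (1 - θ^d) ≤ 1/2) (k : ℕ) :
    ∀ {b : ℝ}, 0 < b →
      ∫ y in ball x b, V y ≤ 2^k * ∫ y in ball x (θ^k * b), V y := by
  induction k with
  | zero => intro b hb; simp
  | succ k ih =>
    intro b hb
    have hb' : 0 < θ^k * b := by positivity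
    have hqd : θ * (θ^k*b) / (θ^k*b) = θ := mul_div_cancel_right₀ θ hb'.ne'
    have h2 : ∫ y in ball x (θ^k*b), V y ≤ 2 * ∫ y in ball x (θ * (θ^k*b)), V y := by
      refine step hB hmeas hloc hpos x (by positivity)
        (by nlinarith) ?_
      rw [hqd]; exact hθd
    have hrw : θ ^ (k+1) * b = θ * (θ^k * b) := by ring
    calc ∫ y in ball x b, V y ≤ 2^k * ∫ y in ball x (θ^k * b), V y := ih hb
    _ ≤ 2^k * (2 * ∫ y in ball x (θ * (θ^k*b)), V y) :=
        mul_le_mul_of_nonneg_left h2 (by positivity)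
    _ = 2^(k+1) * ∫ y in ball x (θ^(k+1) * b), V y := by rw [hrw]; ring

lemma contI (hd : 3 ≤ d) (hmeas : Measurable V)
    (hloc : ∀ x : Ed d, ∃ r > 0, ∃ K : ℝ, ∀ y ∈ ball x r, |V y| ≤ K)
    (x : Ed d) {r₀ : ℝ} (hr₀ : 0 < r₀) :
    ContinuousAt (fun r => ∫ y in ball x r, V y) r₀ := by
  haveI := ntv hd
  have heq : (fun r => ∫ y in ball x r, V y)
      = fun r => ∫ y, (ball x r).indicator V y := by
    funext r; rw [integral_indicator measurableSet_ball]
  rw [heq]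
  refine continuousAt_of_dominated (bound := (ball x (r₀+1)).indicator fun y => |V y|)
    (Eventually.of_forall fun r =>
      (hmeas.indicator measurableSet_ball).aestronglyMeasurable)
    ?_ ?_ ?_
  · -- bound
    filter_upwards [eventually_lt_nhds (lt_add_one r₀)] with r hr
    refine Eventually.of_forall fun y => ?_
    by_cases hy : y ∈ ball x r
    · rw [indicator_of_mem hy]
      have : y ∈ ball x (r₀ + 1) := mem_ball.2 ((mem_ball.1 hy).trans hr)
      rw [Real.norm_eq_abs, ← indicator_of_mem this (fun y => |V y|)]
    · rw [indicator_of_notMem hy]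
      simpa using indicator_nonneg (fun y _ => abs_nonneg (V y)) y
  · exact (integrable_indicator_iff measurableSet_ball).2 ((intOn hmeas hloc x (r₀+1)).abs)
  · have hsph : volume (sphere x r₀) = 0 := Measure.addHaar_sphere volume x r₀
    filter_upwards [measure_eq_zero_iff_ae_notMem.1 hsph] with y hy
    rcases lt_or_gt_of_ne (fun h => hy (mem_sphere.2 h)) with h | h
    · -- dist y x < r₀ : eventually indicator = V y
      have hev : ∀ᶠ r in 𝓝 r₀, (ball x r).indicator V y = V y := by
        filter_upwards [eventually_gt_nhds h] with r hr
        exact indicator_of_mem (mem_ball.2 hr) V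
      exact continuousAt_const.congr (by filter_upwards [hev] with r hr; rw [hr])
    · have hev : ∀ᶠ r in 𝓝 r₀, (ball x r).indicator V y = 0 := by
        filter_upwards [eventually_lt_nhds h] with r hr
        exact indicator_of_notMem (fun hc => absurd (mem_ball.1 hc) (not_lt.2 hr.le)) V
      exact continuousAt_const.congr (by filter_upwards [hev] with r hr; rw [hr])

lemma contPsi (hd : 3 ≤ d) (hmeas : Measurable V)
    (hloc : ∀ x : Ed d, ∃ r > 0, ∃ K : ℝ, ∀ y ∈ ball x r, |V y| ≤ K)
    (x : Ed d) {r₀ : ℝ} (hr₀ : 0 < r₀) :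
    ContinuousAt (psiFun d V x) r₀ := by
  have h1 : ContinuousAt (fun r : ℝ => r ^ ((2:ℝ) - d)) r₀ :=
    Real.continuousAt_rpow_const r₀ _ (Or.inl hr₀.ne')
  exact h1.mul (contI hd hmeas hloc x hr₀)

lemma small_r (hd : 3 ≤ d) (hmeas : Measurable V)
    (hloc : ∀ x : Ed d, ∃ r > 0, ∃ K : ℝ, ∀ y ∈ ball x r, |V y| ≤ K)
    (x : Ed d) : ∃ r > 0, psiFun d V x r ≤ 1 := by
  obtain ⟨ρ, hρ, K, hK⟩ := hloc x
  have hK0 : 0 ≤ K := (abs_nonneg _).trans (hK x (mem_ball_self hρ))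
  set c : ℝ := (volume (ball (0 : Ed d) 1)).toReal with hc
  have hcpos : 0 < c := cd_pos
  set r : ℝ := min (min ρ 1) (1 / (K * c + 1)) with hr
  have hrpos : 0 < r := by
    apply lt_min (lt_min hρ one_pos)
    positivity
  have hr1 : r ≤ 1 := (min_le_left _ _).trans (min_le_right _ _)
  have hrρ : r ≤ ρ := (min_le_left _ _).trans (min_le_left _ _)
  have hrK : r ≤ 1 / (K * c + 1) := min_le_right _ _
  refine ⟨r, hrpos, ?_⟩
  have hint : ∫ y in ball x r, V y ≤ K * (c * r ^ d) := by
    have h1 : ∫ y in ball x r, V y ≤ ∫ _ in ball x r, K := by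
      refine setIntegral_mono_on (intOn hmeas hloc x r)
        (integrableOn_const measure_ball_lt_top.ne) measurableSet_ball
        fun y hy => ?_
      exact (le_abs_self _).trans (hK y (mem_ball.2 ((mem_ball.1 hy).trans_le hrρ)))
    rw [setIntegral_const, smul_eq_mul, measureReal_def, vol_ball x hrpos] at h1
    calc ∫ y in ball x r, V y ≤ r ^ d * c * K := h1
    _ = K * (c * r ^ d) := by ring
  rw [psiFun, rpow_two_sub hrpos]
  have hrd : 0 < r ^ d := pow_pos hrpos d
  calc r^2 / r^d * ∫ y in ball x r, V y ≤ r^2 / r^d * (K * (c * r^d)) := by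
        apply mul_le_mul_of_nonneg_left hint (by positivity)
  _ = K * c * r^2 := by field_simp
  _ ≤ K * c * r := by
      nlinarith [mul_nonneg (mul_nonneg (mul_nonneg hK0 hcpos.le) hrpos.le)
        (sub_nonneg.2 hr1)]
  _ ≤ 1 := by
      have h2 : K * c * r ≤ (K * c) * (1 / (K * c + 1)) :=
        mul_le_mul_of_nonneg_left hrK (by positivity)
      have h3 : (K * c) * (1 / (K * c + 1)) ≤ 1 := by
        rw [mul_one_div, div_le_one (by positivity)]; linarith
      linarith

lemma mainR (hd : 3 ≤ d) (hC₀ : 0 < C₀)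
    (hB : ∀ (x : Ed d) (r : ℝ), 0 < r →
      ∀ᵐ y ∂(volume.restrict (ball x r)), V y ≤ C₀ * ⨍ z in ball x r, V z)
    (hmeas : Measurable V)
    (hloc : ∀ x : Ed d, ∃ r > 0, ∃ K : ℝ, ∀ y ∈ ball x r, |V y| ≤ K)
    (hpos : ∀ᵐ z : Ed d ∂volume, 0 < V z) (x : Ed d) :
    ∃ R : ℝ, 0 < R ∧ psiFun d V x R = 1 ∧
      (∀ r : ℝ, 0 < r → psiFun d V x r ≤ 1 → r ≤ R) ∧ mFun d V x = 1 / R := by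
  set S := {r : ℝ | 0 < r ∧ psiFun d V x r ≤ 1} with hS
  obtain ⟨r₁, hr₁, hψr₁⟩ := small_r hd hmeas hloc x
  have hne : S.Nonempty := ⟨r₁, hr₁, hψr₁⟩
  have hψ1pos : 0 < psiFun d V x 1 := by
    have h1 : psiFun d V x 1 = ∫ y in ball x 1, V y := by
      rw [psiFun, Real.one_rpow, one_mul]
    rw [h1]; exact int_pos hmeas hloc hpos x one_pos
  have hbdd : BddAbove S := by
    refine ⟨max 1 (C₀ / psiFun d V x 1), fun r hr => ?_⟩
    obtain ⟨hr0, hrψ⟩ := hr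
    rcases le_or_gt r 1 with h | h
    · exact le_max_of_le_left h
    · have hg := growth hB hmeas hloc x one_pos h.le
      rw [div_one] at hg
      have h2 : r ^ 2 * psiFun d V x 1 ≤ C₀ := by nlinarith
      have h3 : r ≤ C₀ / psiFun d V x 1 := by
        rw [le_div_iff₀ hψ1pos]; nlinarith
      exact le_max_of_le_right h3
  set R := sSup S with hR
  have hub : ∀ r ∈ S, r ≤ R := fun r hr => le_csSup hbdd hr
  have hRpos : 0 < R := lt_of_lt_of_le hr₁ (hub r₁ ⟨hr₁, hψr₁⟩)
  have hcont := contPsi hd hmeas hloc x hRpos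
  have hle : psiFun d V x R ≤ 1 := by
    by_contra hcon; push_neg at hcon
    have hnb : psiFun d V x ⁻¹' (Ioi 1) ∈ 𝓝 R := hcont (Ioi_mem_nhds hcon)
    obtain ⟨ε, hε, hball⟩ := Metric.mem_nhds_iff.1 hnb
    have hub2 : ∀ s ∈ S, s ≤ R - ε / 2 := by
      intro s hs
      by_contra hcon2; push_neg at hcon2
      have hsR : s ≤ R := hub s hs
      have : s ∈ ball R ε := by
        rw [mem_ball, Real.dist_eq, abs_sub_lt_iff]; constructor <;> linarith
      exact absurd hs.2 (not_le.2 (hball this))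
    have := csSup_le hne hub2
    linarith
  have heq : psiFun d V x R = 1 := by
    rcases eq_or_lt_of_le hle with h | h
    · exact h
    exfalso
    have hnb : psiFun d V x ⁻¹' (Iio 1) ∈ 𝓝 R := hcont (Iio_mem_nhds h)
    obtain ⟨ε, hε, hball⟩ := Metric.mem_nhds_iff.1 hnb
    have hmem : R + ε / 2 ∈ ball R ε := by
      rw [mem_ball, Real.dist_eq, abs_sub_lt_iff]; constructor <;> linarith
    have : R + ε / 2 ∈ S := ⟨by linarith, (hball hmem).le⟩
    have := hub _ this
    linarith
  refine ⟨R, hRpos, heq, fun r hr hψ => hub r ⟨hr, hψ⟩, ?_⟩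
  have hmem : (1 / R) ∈ {s : ℝ | ∃ r : ℝ, 0 < r ∧ s = 1 / r ∧ psiFun d V x r ≤ 1} :=
    ⟨R, hRpos, rfl, heq.le⟩
  have hlb : ∀ s ∈ {s : ℝ | ∃ r : ℝ, 0 < r ∧ s = 1 / r ∧ psiFun d V x r ≤ 1}, 1 / R ≤ s := by
    rintro s ⟨r, hr, rfl, hψ⟩
    exact one_div_le_one_div_of_le hr (hub r ⟨hr, hψ⟩)
  rw [mFun]
  exact le_antisymm (csInf_le ⟨1 / R, hlb⟩ hmem) (le_csInf ⟨_, hmem⟩ hlb)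

lemma thetaFacts (hd : 3 ≤ d) (hC₀ : 0 < C₀) :
    ∃ θ : ℝ, 0 < θ ∧ θ < 1 ∧ C₀ * (1 - θ^d) ≤ 1/2 := by
  set A : ℝ := max C₀ 1 with hA
  have hA1 : (1:ℝ) ≤ A := le_max_right _ _
  have hA0 : (0:ℝ) < A := lt_of_lt_of_le one_pos hA1
  set β : ℝ := 1 - 1/(2*A) with hβ
  have hβ0 : 0 < β := by
    have : 1/(2*A) ≤ 1/2 := by
      apply one_div_le_one_div_of_le (by norm_num) (by linarith)
    simp only [hβ]; linarith
  have hβ1 : β < 1 := by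
    have : 0 < 1/(2*A) := by positivity
    simp only [hβ]; linarith
  have hdne : ((d:ℝ)) ≠ 0 := by positivity
  refine ⟨β ^ ((d:ℝ)⁻¹), Real.rpow_pos_of_pos hβ0 _, ?_, ?_⟩
  · exact Real.rpow_lt_one hβ0.le hβ1 (by positivity)
  · have hpow : (β ^ ((d:ℝ)⁻¹)) ^ d = β := by
      rw [← Real.rpow_natCast (β ^ ((d:ℝ)⁻¹)) d, ← Real.rpow_mul hβ0.le,
        inv_mul_cancel₀ hdne, Real.rpow_one]
    rw [hpow]
    have h1 : 1 - β = 1/(2*A) := by simp [hβ]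
    rw [h1]
    have h2 : C₀ ≤ A := le_max_left _ _
    rw [mul_one_div, div_le_div_iff₀ (by positivity) (by norm_num)]
    linarith

end S2

/-- `0 < m(x,V) < ∞` with `ψ(x, 1/m(x,V)) = 1`; moreover
`ψ(x,r) ∼ 1` iff `r·m(x,V) ∼ 1`, with comparison constants depending only on `d, C₀`
and the given comparison bounds. -/
theorem stmt2 (d : ℕ) (hd : 3 ≤ d) (C₀ : ℝ) (hC₀ : 0 < C₀) :
    (∀ V : Ed d → ℝ, GoodV d C₀ V → ¬ (V =ᵐ[volume] 0) → ∀ x : Ed d,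
      ((∃ r > 0, psiFun d V x r ≤ 1) ∧ 0 < mFun d V x) ∧
        psiFun d V x (1 / mFun d V x) = 1) ∧
    (∀ c₁ c₂ : ℝ, 0 < c₁ → c₁ ≤ c₂ → ∃ c C : ℝ, 0 < c ∧ c ≤ C ∧
      ∀ V : Ed d → ℝ, GoodV d C₀ V → ¬ (V =ᵐ[volume] 0) →
        ∀ (x : Ed d) (r : ℝ), 0 < r →
          c₁ ≤ psiFun d V x r → psiFun d V x r ≤ c₂ →
            c ≤ r * mFun d V x ∧ r * mFun d V x ≤ C) ∧
    (∀ C₁ C₂ : ℝ, 0 < C₁ → C₁ ≤ C₂ → ∃ c₁' c₂' : ℝ, 0 < c₁' ∧ c₁' ≤ c₂' ∧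
      ∀ V : Ed d → ℝ, GoodV d C₀ V → ¬ (V =ᵐ[volume] 0) →
        ∀ (x : Ed d) (r : ℝ), 0 < r →
          C₁ ≤ r * mFun d V x → r * mFun d V x ≤ C₂ →
            c₁' ≤ psiFun d V x r ∧ psiFun d V x r ≤ c₂') := by
  have hd3 : (3:ℝ) ≤ (d:ℝ) := by exact_mod_cast hd
  have hexp : (2:ℝ) - d ≤ 0 := by linarith
  refine ⟨?_, ?_, ?_⟩
  · -- Part 1
    intro V hV _ x
    obtain ⟨hmeas, hloc, hpos', hB⟩ := hV
    obtain ⟨R, hR, hψR, hub, hm⟩ := S2.mainR hd hC₀ hB hmeas hloc hpos' x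
    refine ⟨⟨⟨R, hR, hψR.le⟩, ?_⟩, ?_⟩
    · rw [hm]; positivity
    · rw [hm, one_div_one_div]; exact hψR
  · -- Part (i)
    intro c₁ c₂ hc₁ hc12
    refine ⟨min 1 (Real.sqrt (C₀ / c₁))⁻¹, max 1 (Real.sqrt (C₀ * c₂)), ?_, ?_, ?_⟩
    · exact lt_min one_pos (inv_pos.2 (Real.sqrt_pos.2 (div_pos hC₀ hc₁)))
    · exact (min_le_left _ _).trans (le_max_left _ _)
    intro V hV _ x r hr hlow hupp
    obtain ⟨hmeas, hloc, hpos', hB⟩ := hV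
    obtain ⟨R, hR, hψR, hub, hm⟩ := S2.mainR hd hC₀ hB hmeas hloc hpos' x
    rw [hm]
    have hrR : r * (1/R) = r / R := by ring
    rw [hrR]
    rcases le_total r R with hcase | hcase
    · have hg := S2.growth hB hmeas hloc x hr hcase
      rw [hψR, mul_one] at hg
      have hRr : 0 < R / r := div_pos hR hr
      have h1 : (R/r)^2 ≤ C₀ / c₁ := by
        rw [le_div_iff₀ hc₁]
        nlinarith [sq_nonneg (R/r)]
      have h2 : R / r ≤ Real.sqrt (C₀ / c₁) := by
        rw [← Real.sqrt_sq hRr.le]; exact Real.sqrt_le_sqrt h1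
      have h3 : (Real.sqrt (C₀ / c₁))⁻¹ ≤ r / R := by
        have := one_div_le_one_div_of_le hRr h2
        rwa [one_div_div, one_div] at this
      constructor
      · exact (min_le_right _ _).trans h3
      · exact ((div_le_one hR).2 hcase).trans (le_max_left _ _)
    · have hg := S2.growth hB hmeas hloc x hR hcase
      rw [hψR, mul_one] at hg
      have hrR0 : 0 < r / R := div_pos hr hR
      have h1 : (r/R)^2 ≤ C₀ * c₂ := by nlinarith
      have h2 : r / R ≤ Real.sqrt (C₀ * c₂) := by
        rw [← Real.sqrt_sq hrR0.le]; exact Real.sqrt_le_sqrt h1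
      constructor
      · exact (min_le_left _ _).trans ((one_le_div hR).2 hcase)
      · exact h2.trans (le_max_right _ _)
  · -- Part (ii)
    intro C₁ C₂ hC₁ hC12
    have hC₂ : 0 < C₂ := hC₁.trans_le hC12
    obtain ⟨θ, hθ0, hθ1, hθd⟩ := S2.thetaFacts hd hC₀
    obtain ⟨k₁, hk₁⟩ := exists_pow_lt_of_lt_one (lt_min hC₁ one_pos) hθ1
    obtain ⟨k₂, hk₂⟩ := exists_pow_lt_of_lt_one (lt_min (inv_pos.2 hC₂) one_pos) hθ1
    have h2k₁ : (0:ℝ) < 2^k₁ := by positivity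
    have h2k₂ : (0:ℝ) < 2^k₂ := by positivity
    have hC₂e : 0 < C₂ ^ ((2:ℝ) - d) := Real.rpow_pos_of_pos hC₂ _
    have hC₁e : 0 < C₁ ^ ((2:ℝ) - d) := Real.rpow_pos_of_pos hC₁ _
    refine ⟨min ((2:ℝ)^k₁)⁻¹ (C₂ ^ ((2:ℝ) - d)), max ((2:ℝ)^k₂) (C₁ ^ ((2:ℝ) - d)),
      lt_min (by positivity) hC₂e, ?_, ?_⟩
    · exact le_trans (min_le_right _ _)
        (le_trans (Real.rpow_le_rpow_of_nonpos hC₁ hC12 hexp) (le_max_right _ _))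
    intro V hV _ x r hr h1 h2
    obtain ⟨hmeas, hloc, hpos', hB⟩ := hV
    obtain ⟨R, hR, hψR, hub, hm⟩ := S2.mainR hd hC₀ hB hmeas hloc hpos' x
    rw [hm, mul_one_div] at h1 h2
    have hrR1 : C₁ * R ≤ r := (le_div_iff₀ hR).1 h1
    have hrR2 : r ≤ C₂ * R := (div_le_iff₀ hR).1 h2
    have hIR : 0 ≤ ∫ y in ball x R, V y := S2.int_nonneg hpos' x R
    have hIr : 0 ≤ ∫ y in ball x r, V y := S2.int_nonneg hpos' x r
    have hRe : 0 < R ^ ((2:ℝ) - d) := Real.rpow_pos_of_pos hR _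
    have hre : 0 < r ^ ((2:ℝ) - d) := Real.rpow_pos_of_pos hr _
    have hψRval : R ^ ((2:ℝ) - d) * ∫ y in ball x R, V y = 1 := hψR
    constructor
    · -- lower bound
      rcases le_total r R with hcase | hcase
      · -- r ≤ R
        have hiter := S2.iter hB hmeas hloc hpos' x hθ0 hθ1.le hθd k₁ hR
        have hmon : ∫ y in ball x (θ^k₁ * R), V y ≤ ∫ y in ball x r, V y := by
          refine S2.int_mono hmeas hloc hpos' x ?_
          calc θ^k₁ * R ≤ C₁ * R :=
            mul_le_mul_of_nonneg_right (hk₁.le.trans (min_le_left _ _)) hR.le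
          _ ≤ r := hrR1
        have hIRr : ∫ y in ball x R, V y ≤ 2^k₁ * ∫ y in ball x r, V y :=
          hiter.trans (mul_le_mul_of_nonneg_left hmon (by positivity))
        have hrpow : R ^ ((2:ℝ) - d) ≤ r ^ ((2:ℝ) - d) :=
          Real.rpow_le_rpow_of_nonpos hr hcase hexp
        calc min ((2:ℝ)^k₁)⁻¹ (C₂ ^ ((2:ℝ) - d)) ≤ ((2:ℝ)^k₁)⁻¹ := min_le_left _ _
        _ = ((2:ℝ)^k₁)⁻¹ * (R ^ ((2:ℝ) - d) * ∫ y in ball x R, V y) := by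
            rw [hψRval, mul_one]
        _ ≤ ((2:ℝ)^k₁)⁻¹ * (R ^ ((2:ℝ) - d) * (2^k₁ * ∫ y in ball x r, V y)) := by
            apply mul_le_mul_of_nonneg_left _ (by positivity)
            exact mul_le_mul_of_nonneg_left hIRr hRe.le
        _ = R ^ ((2:ℝ) - d) * ∫ y in ball x r, V y := by
            field_simp
        _ ≤ r ^ ((2:ℝ) - d) * ∫ y in ball x r, V y :=
            mul_le_mul_of_nonneg_right hrpow hIr
        _ = psiFun d V x r := rfl
      · -- R ≤ r
        have hmon : ∫ y in ball x R, V y ≤ ∫ y in ball x r, V y :=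
          S2.int_mono hmeas hloc hpos' x hcase
        have hrpow : (C₂ * R) ^ ((2:ℝ) - d) ≤ r ^ ((2:ℝ) - d) :=
          Real.rpow_le_rpow_of_nonpos hr hrR2 hexp
        calc min ((2:ℝ)^k₁)⁻¹ (C₂ ^ ((2:ℝ) - d)) ≤ C₂ ^ ((2:ℝ) - d) := min_le_right _ _
        _ = C₂ ^ ((2:ℝ) - d) * (R ^ ((2:ℝ) - d) * ∫ y in ball x R, V y) := by
            rw [hψRval, mul_one]
        _ = (C₂ * R) ^ ((2:ℝ) - d) * ∫ y in ball x R, V y := by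
            rw [Real.mul_rpow hC₂.le hR.le]; ring
        _ ≤ r ^ ((2:ℝ) - d) * ∫ y in ball x R, V y :=
            mul_le_mul_of_nonneg_right hrpow hIR
        _ ≤ r ^ ((2:ℝ) - d) * ∫ y in ball x r, V y :=
            mul_le_mul_of_nonneg_left hmon hre.le
        _ = psiFun d V x r := rfl
    · -- upper bound
      rcases le_total r R with hcase | hcase
      · -- r ≤ R
        have hmon : ∫ y in ball x r, V y ≤ ∫ y in ball x R, V y :=
          S2.int_mono hmeas hloc hpos' x hcase
        have hC₁R : 0 < C₁ * R := by positivity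
        have hrpow : r ^ ((2:ℝ) - d) ≤ (C₁ * R) ^ ((2:ℝ) - d) :=
          Real.rpow_le_rpow_of_nonpos hC₁R hrR1 hexp
        calc psiFun d V x r = r ^ ((2:ℝ) - d) * ∫ y in ball x r, V y := rfl
        _ ≤ r ^ ((2:ℝ) - d) * ∫ y in ball x R, V y :=
            mul_le_mul_of_nonneg_left hmon hre.le
        _ ≤ (C₁ * R) ^ ((2:ℝ) - d) * ∫ y in ball x R, V y :=
            mul_le_mul_of_nonneg_right hrpow hIR
        _ = C₁ ^ ((2:ℝ) - d) * (R ^ ((2:ℝ) - d) * ∫ y in ball x R, V y) := by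
            rw [Real.mul_rpow hC₁.le hR.le]; ring
        _ = C₁ ^ ((2:ℝ) - d) := by rw [hψRval, mul_one]
        _ ≤ max ((2:ℝ)^k₂) (C₁ ^ ((2:ℝ) - d)) := le_max_right _ _
      · -- R ≤ r
        have hiter := S2.iter hB hmeas hloc hpos' x hθ0 hθ1.le hθd k₂ hr
        have hmon : ∫ y in ball x (θ^k₂ * r), V y ≤ ∫ y in ball x R, V y := by
          refine S2.int_mono hmeas hloc hpos' x ?_
          have h4 : θ^k₂ * r ≤ C₂⁻¹ * r :=
            mul_le_mul_of_nonneg_right (hk₂.le.trans (min_le_left _ _)) hr.le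
          have h5 : C₂⁻¹ * r ≤ R := by
            have h6 := mul_le_mul_of_nonneg_left hrR2 (inv_nonneg.2 hC₂.le)
            rwa [← mul_assoc, inv_mul_cancel₀ hC₂.ne', one_mul] at h6
          linarith
        have hIrR : ∫ y in ball x r, V y ≤ 2^k₂ * ∫ y in ball x R, V y :=
          hiter.trans (mul_le_mul_of_nonneg_left hmon (by positivity))
        have hrpow : r ^ ((2:ℝ) - d) ≤ R ^ ((2:ℝ) - d) :=
          Real.rpow_le_rpow_of_nonpos hR hcase hexp
        calc psiFun d V x r = r ^ ((2:ℝ) - d) * ∫ y in ball x r, V y := rfl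
        _ ≤ r ^ ((2:ℝ) - d) * (2^k₂ * ∫ y in ball x R, V y) :=
            mul_le_mul_of_nonneg_left hIrR hre.le
        _ ≤ R ^ ((2:ℝ) - d) * (2^k₂ * ∫ y in ball x R, V y) :=
            mul_le_mul_of_nonneg_right hrpow (by positivity)
        _ = 2^k₂ * (R ^ ((2:ℝ) - d) * ∫ y in ball x R, V y) := by ring
        _ = 2^k₂ := by rw [hψRval, mul_one]
        _ ≤ max ((2:ℝ)^k₂) (C₁ ^ ((2:ℝ) - d)) := le_max_left _ _
end
end

section
/- Let d ≥ 3 and let V be a B∞ potential with constant C₀ which is not almost everywhere zero. Then there exist constants C > 0, c > 0 and k₀ > 0, depending only on d and C₀, such that for all x, y ∈ ℝ^d: (i) if |x − y| ≤ C/m(x,V) then c·m(y,V) ≤ m(x,V) ≤ C·m(y,V); (ii) c (1 + |x−y| m(x,V))^{−k₀} ≤ m(x,V)/m(y,V) ≤ C (1 + |x−y| m(x,V))^{k₀/(k₀+1)}; (iii) c (1 + |x−y| m(y,V))^{1/(k₀+1)} ≤ 1 + |x−y| m(x,V) ≤ C (1 + |x−y| m(y,V))^{k₀+1}. -/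
open MeasureTheory Metric Set

noncomputable section

namespace Shen

structure Hyp (d : ℕ) (C₁ : ℝ) (V : Ed d → ℝ) : Prop where
  hd : 3 ≤ d
  meas : Measurable V
  loc : ∀ x : Ed d, ∃ r > 0, ∃ K : ℝ, ∀ y ∈ ball x r, |V y| ≤ K
  pos : ∀ᵐ x : Ed d ∂volume, 0 < V x
  hC : 1 ≤ C₁
  hB : BInfty d C₁ V

variable {d : ℕ} {C₁ : ℝ} {V : Ed d → ℝ}

/-- the integral of `V` over a ball -/
def In (d : ℕ) (V : Ed d → ℝ) (x : Ed d) (r : ℝ) : ℝ := ∫ y in ball x r, V y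

lemma bddOnCompact (h : Hyp d C₁ V) {s : Set (Ed d)} (hs : IsCompact s) :
    ∃ K : ℝ, 0 ≤ K ∧ ∀ y ∈ s, |V y| ≤ K := by
  choose r hr K hK using h.loc
  obtain ⟨t, ht⟩ := hs.elim_finite_subcover (fun x => ball x (r x))
    (fun x => isOpen_ball) (fun x hx => mem_iUnion.2 ⟨x, mem_ball_self (hr x)⟩)
  refine ⟨∑ x ∈ t, max (K x) 0, Finset.sum_nonneg fun x _ => le_max_right _ _, fun y hy => ?_⟩
  obtain ⟨x, hxt, hyx⟩ := mem_iUnion₂.1 (ht hy)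
  calc |V y| ≤ max (K x) 0 := le_max_of_le_left (hK x y hyx)
    _ ≤ _ := Finset.single_le_sum (fun i _ => le_max_right (K i) 0) hxt

lemma intOn (h : Hyp d C₁ V) (x : Ed d) (r : ℝ) : IntegrableOn V (ball x r) volume := by
  obtain ⟨K, _, hK⟩ := bddOnCompact h (isCompact_closedBall x r)
  refine Measure.integrableOn_of_bounded (M := K) (measure_ball_lt_top.ne)
    h.meas.aestronglyMeasurable ?_
  refine (ae_restrict_iff' measurableSet_ball).2 <| ae_of_all _ fun y hy => ?_
  rw [Real.norm_eq_abs]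
  exact hK y (ball_subset_closedBall hy)

lemma In_nonneg (h : Hyp d C₁ V) (x : Ed d) (r : ℝ) : 0 ≤ In d V x r :=
  setIntegral_nonneg_ae measurableSet_ball <| h.pos.mono fun y hy _ => hy.le

lemma V_nonneg_restrict (h : Hyp d C₁ V) (s : Set (Ed d)) :
    0 ≤ᵐ[volume.restrict s] V :=
  ae_restrict_of_ae <| h.pos.mono fun y hy => hy.le

lemma In_mono (h : Hyp d C₁ V) (x : Ed d) {r R : ℝ} (hrR : r ≤ R) :
    In d V x r ≤ In d V x R :=
  setIntegral_mono_set (intOn h x R) (V_nonneg_restrict h _)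
    (HasSubset.Subset.eventuallyLE (ball_subset_ball hrR))

lemma In_pos (h : Hyp d C₁ V) (x : Ed d) {r : ℝ} (hr : 0 < r) : 0 < In d V x r := by
  haveI : Nonempty (Fin d) := ⟨⟨0, by have := h.hd; omega⟩⟩
  rw [In, setIntegral_pos_iff_support_of_nonneg_ae (V_nonneg_restrict h _) (intOn h x r)]
  have h0 : volume {y : Ed d | ¬ 0 < V y} = 0 := h.pos
  have : ball x r ⊆ (Function.support V) ∪ {y : Ed d | ¬ 0 < V y} := by
    intro y _
    by_cases hv : 0 < V y
    · exact Or.inl (by simp [Function.support, hv.ne'])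
    · exact Or.inr hv
  by_contra hc
  push_neg at hc
  simp only [nonpos_iff_eq_zero] at hc
  have : volume (ball x r) = 0 := by
    refine measure_mono_null (t := (Function.support V ∩ ball x r) ∪ {y : Ed d | ¬ 0 < V y}) ?_ ?_
    · intro y hy
      rcases this hy with h1 | h1
      · exact Or.inl ⟨h1, hy⟩
      · exact Or.inr h1
    · exact measure_union_null hc h0
  exact ((measure_ball_pos volume x hr).ne' this).elim

/-- volume of the ball, in real form -/
lemma vol_ball (h : Hyp d C₁ V) (x : Ed d) {r : ℝ} (hr : 0 ≤ r) :
    (volume (ball x r)).toReal = r ^ d * (volume (ball (0 : Ed d) 1)).toReal := by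
  haveI : Nonempty (Fin d) := ⟨⟨0, by have := h.hd; omega⟩⟩
  rw [Measure.addHaar_ball volume x hr, finrank_euclideanSpace_fin,
    ENNReal.toReal_mul, ENNReal.toReal_ofReal (by positivity)]

lemma kappa_pos (h : Hyp d C₁ V) : 0 < (volume (ball (0 : Ed d) 1)).toReal :=
  ENNReal.toReal_pos (measure_ball_pos volume _ one_pos).ne' measure_ball_lt_top.ne

-- appended to w2 content
lemma In_le_const (h : Hyp d C₁ V) {x : Ed d} {R : ℝ} (hR : 0 < R)
    {s : Set (Ed d)} (hs : s ⊆ ball x R) (hsm : MeasurableSet s) :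
    ∫ y in s, V y ≤ (volume s).toReal * (C₁ * ((volume (ball x R)).toReal⁻¹ * In d V x R)) := by
  have hae : ∀ᵐ y ∂(volume.restrict (ball x R)),
      V y ≤ C₁ * ((volume (ball x R)).toReal⁻¹ * In d V x R) := by
    have := h.hB x R hR
    refine this.mono fun y hy => ?_
    rwa [setAverage_eq, smul_eq_mul] at hy
  have h2 := ae_restrict_of_ae_restrict_of_subset hs hae
  calc ∫ y in s, V y ≤ ∫ _ in s, C₁ * ((volume (ball x R)).toReal⁻¹ * In d V x R) :=
      integral_mono_ae ((intOn h x R).mono_set hs)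
        (integrableOn_const (lt_of_le_of_lt (measure_mono hs) measure_ball_lt_top).ne)
        h2
    _ = _ := by rw [setIntegral_const, smul_eq_mul, measureReal_def]

/-- Key comparison: if `B(y,r) ⊆ B(x,R)` then `∫_{B(y,r)} V ≤ C₁ (r/R)^d ∫_{B(x,R)} V`,
in product form. -/
lemma In_le (h : Hyp d C₁ V) {x y : Ed d} {r R : ℝ} (hr : 0 < r)
    (hsub : dist x y + r ≤ R) :
    In d V y r * R ^ d ≤ C₁ * r ^ d * In d V x R := by
  have hR : 0 < R := lt_of_lt_of_le (by positivity) hsub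
  have hball : ball y r ⊆ ball x R := by
    intro z hz
    rw [mem_ball] at hz ⊢
    calc dist z x ≤ dist z y + dist y x := dist_triangle _ _ _
      _ < r + dist y x := by linarith
      _ ≤ R := by rw [dist_comm]; linarith
  have hκ := kappa_pos h
  set κ := (volume (ball (0 : Ed d) 1)).toReal with hκdef
  have h1 : In d V y r ≤ (r ^ d * κ) * (C₁ * (((R : ℝ) ^ d * κ)⁻¹ * In d V x R)) := by
    have := In_le_const h hR hball measurableSet_ball
    rwa [vol_ball h y hr.le, vol_ball h x hR.le] at this
  have hRd : (0:ℝ) < R ^ d := by positivity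
  have hIR := In_nonneg h x R
  calc In d V y r * R ^ d ≤ ((r ^ d * κ) * (C₁ * ((R ^ d * κ)⁻¹ * In d V x R))) * R ^ d := by
        apply mul_le_mul_of_nonneg_right h1 hRd.le
    _ = C₁ * r ^ d * In d V x R := by
        field_simp
lemma rpow_key {s : ℝ} (hs : 0 < s) (d : ℕ) : s ^ ((2:ℝ) - d) * s ^ d = s ^ 2 := by
  rw [← Real.rpow_natCast s d, ← Real.rpow_add hs]
  have : (2:ℝ) - d + d = ((2:ℕ):ℝ) := by push_cast; ring
  rw [this, Real.rpow_natCast]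

lemma psi_nonneg (h : Hyp d C₁ V) (x : Ed d) {r : ℝ} (hr : 0 < r) :
    0 ≤ psiFun d V x r :=
  mul_nonneg (Real.rpow_pos_of_pos hr _).le (In_nonneg h x r)

/-- Key geometric comparison for `ψ`. -/
lemma psi_cross (h : Hyp d C₁ V) {x y : Ed d} {r R : ℝ} (hr : 0 < r)
    (hsub : dist x y + r ≤ R) :
    psiFun d V y r ≤ C₁ * (r / R) ^ 2 * psiFun d V x R := by
  have hR : 0 < R := lt_of_lt_of_le (by positivity) hsub
  have h1 := In_le h hr hsub
  have e1 := rpow_key hr d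
  have e2 := rpow_key hR d
  have hP : (0:ℝ) < r ^ ((2:ℝ)-(d:ℝ)) := Real.rpow_pos_of_pos hr _
  have hRd : (0:ℝ) < R ^ d := by positivity
  have main : psiFun d V y r * R ^ d ≤ (C₁ * (r / R) ^ 2 * psiFun d V x R) * R ^ d := by
    calc psiFun d V y r * R ^ d = r ^ ((2:ℝ)-(d:ℝ)) * (In d V y r * R ^ d) := by
          rw [show psiFun d V y r = r ^ ((2:ℝ)-(d:ℝ)) * In d V y r from rfl]; ring
      _ ≤ r ^ ((2:ℝ)-(d:ℝ)) * (C₁ * r ^ d * In d V x R) :=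
          mul_le_mul_of_nonneg_left h1 hP.le
      _ = C₁ * (r ^ ((2:ℝ)-(d:ℝ)) * r ^ d) * In d V x R := by ring
      _ = C₁ * r ^ 2 * In d V x R := by rw [e1]
      _ = (C₁ * (r / R) ^ 2 * psiFun d V x R) * R ^ d := by
          show _ = C₁ * (r / R) ^ 2 * (R ^ ((2:ℝ)-(d:ℝ)) * In d V x R) * R ^ d
          rw [show C₁ * (r/R)^2 * (R ^ ((2:ℝ)-(d:ℝ)) * In d V x R) * R^d
              = C₁ * (r/R)^2 * In d V x R * (R ^ ((2:ℝ)-(d:ℝ)) * R^d) from by ring, e2]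
          field_simp
  exact le_of_mul_le_mul_right main hRd
def Sset (d : ℕ) (V : Ed d → ℝ) (x : Ed d) : Set ℝ :=
  {s : ℝ | ∃ r : ℝ, 0 < r ∧ s = 1 / r ∧ psiFun d V x r ≤ 1}

lemma Sset_pos {x : Ed d} : ∀ s ∈ Sset d V x, 0 < s := by
  rintro s ⟨r, hr, rfl, -⟩; positivity

lemma Sset_bdd {x : Ed d} : BddBelow (Sset d V x) :=
  ⟨0, fun s hs => (Sset_pos s hs).le⟩

lemma mFun_eq (x : Ed d) : mFun d V x = sInf (Sset d V x) := rfl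

lemma Sset_nonempty (h : Hyp d C₁ V) (x : Ed d) : (Sset d V x).Nonempty := by
  obtain ⟨r₀, hr₀, K, hK⟩ := h.loc x
  have hκ := kappa_pos h
  set κ := (volume (ball (0 : Ed d) 1)).toReal with hκdef
  set K' := max K 1 with hK'def
  have hK' : 0 < K' := lt_max_of_lt_right one_pos
  set r := min r₀ (Real.sqrt (K' * κ))⁻¹ with hrdef
  have hr : 0 < r := lt_min hr₀ (by positivity)
  refine ⟨1/r, r, hr, rfl, ?_⟩
  have hIn : In d V x r ≤ K' * (r ^ d * κ) := by
    have hb : ∀ᵐ y ∂(volume.restrict (ball x r)), V y ≤ K' := by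
      refine (ae_restrict_iff' measurableSet_ball).2 <| ae_of_all _ fun y hy => ?_
      have : y ∈ ball x r₀ := ball_subset_ball (min_le_left _ _) hy
      exact le_trans (le_trans (le_abs_self _) (hK y this)) (le_max_left _ _)
    calc In d V x r ≤ ∫ _ in ball x r, K' :=
        integral_mono_ae (intOn h x r) (integrableOn_const measure_ball_lt_top.ne) hb
      _ = (volume (ball x r)).toReal * K' := by rw [setIntegral_const, smul_eq_mul, measureReal_def]
      _ = K' * (r ^ d * κ) := by rw [vol_ball h x hr.le]; ring
  have hsq : K' * κ * r ^ 2 ≤ 1 := by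
    have h1 : r ≤ (Real.sqrt (K' * κ))⁻¹ := min_le_right _ _
    have h2 : 0 < Real.sqrt (K' * κ) := Real.sqrt_pos.2 (by positivity)
    have h3 : r ^ 2 ≤ ((Real.sqrt (K' * κ))⁻¹) ^ 2 := by
      apply pow_le_pow_left₀ hr.le h1
    have h4 : ((Real.sqrt (K' * κ))⁻¹) ^ 2 = (K' * κ)⁻¹ := by
      rw [← one_div, div_pow, one_pow, Real.sq_sqrt (by positivity : (0:ℝ) ≤ K' * κ), one_div]
    calc K' * κ * r ^ 2 ≤ K' * κ * (K' * κ)⁻¹ := by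
          rw [← h4]; exact mul_le_mul_of_nonneg_left h3 (by positivity)
      _ = 1 := mul_inv_cancel₀ (by positivity)
  calc psiFun d V x r = r ^ ((2:ℝ) - d) * In d V x r := rfl
    _ ≤ r ^ ((2:ℝ) - d) * (K' * (r ^ d * κ)) :=
        mul_le_mul_of_nonneg_left hIn (Real.rpow_pos_of_pos hr _).le
    _ = K' * κ * (r ^ ((2:ℝ) - d) * r ^ d) := by ring
    _ = K' * κ * r ^ 2 := by rw [rpow_key hr]
    _ ≤ 1 := hsq

lemma m_nonneg (x : Ed d) : 0 ≤ mFun d V x :=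
  Real.sInf_nonneg (fun s hs => (Sset_pos s hs).le)

lemma m_le (h : Hyp d C₁ V) {x : Ed d} {r : ℝ} (hr : 0 < r)
    (hψ : psiFun d V x r ≤ 1) : mFun d V x ≤ 1 / r :=
  csInf_le Sset_bdd ⟨r, hr, rfl, hψ⟩

lemma psi_one_pos (h : Hyp d C₁ V) (x : Ed d) : 0 < psiFun d V x 1 := by
  have : psiFun d V x 1 = In d V x 1 := by
    rw [psiFun, Real.one_rpow, one_mul]; rfl
  rw [this]; exact In_pos h x one_pos

lemma m_pos (h : Hyp d C₁ V) (x : Ed d) : 0 < mFun d V x := by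
  set ψ₁ := psiFun d V x 1 with hψ₁def
  have hψ₁ := psi_one_pos h x
  have hC : 0 < C₁ := lt_of_lt_of_le one_pos h.hC
  set R₁ := max 1 (Real.sqrt (C₁ / ψ₁)) with hR₁def
  have hR₁ : 0 < R₁ := lt_max_of_lt_left one_pos
  have key : ∀ s ∈ Sset d V x, 1 / R₁ ≤ s := by
    rintro s ⟨r, hr, rfl, hψr⟩
    rcases le_or_gt r 1 with hr1 | hr1
    · calc 1 / R₁ ≤ 1 := by
            rw [div_le_one hR₁]; exact le_max_left _ _
        _ ≤ 1 / r := by rw [le_div_iff₀ hr]; linarith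
    · have hcross := psi_cross h (x := x) (y := x) (R := r) one_pos (by simp [dist_self]; linarith)
      have hsq : ψ₁ * r ^ 2 ≤ C₁ := by
        have h2 : C₁ * (1/r)^2 * psiFun d V x r ≤ C₁ * (1/r)^2 := by
          calc C₁ * (1/r)^2 * psiFun d V x r ≤ C₁ * (1/r)^2 * 1 :=
                mul_le_mul_of_nonneg_left hψr (by positivity)
            _ = C₁ * (1/r)^2 := mul_one _
        have h3 : ψ₁ ≤ C₁ * (1/r)^2 := le_trans hcross h2
        have h4 := mul_le_mul_of_nonneg_right h3 (sq_nonneg r)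
        calc ψ₁ * r ^ 2 ≤ C₁ * (1/r)^2 * r^2 := h4
          _ = C₁ := by field_simp
      have hrle : r ≤ R₁ := by
        have : r ^ 2 ≤ C₁ / ψ₁ := by rw [le_div_iff₀ hψ₁]; linarith
        have := Real.sqrt_le_sqrt this
        rw [Real.sqrt_sq (by positivity : (0:ℝ) ≤ r)] at this
        exact le_trans this (le_max_right _ _)
      calc 1 / R₁ ≤ 1 / r := by
            apply one_div_le_one_div_of_le hr hrle
        _ = 1 / r := rfl
  calc 0 < 1 / R₁ := by positivity
    _ ≤ mFun d V x := le_csInf (Sset_nonempty h x) key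

lemma psi_le_sq (h : Hyp d C₁ V) {x : Ed d} {r s : ℝ} (hr : 0 < r)
    (hms : mFun d V x < s) (hrs : r * s ≤ 1) : psiFun d V x r ≤ C₁ * (r * s) ^ 2 := by
  have hs : 0 < s := lt_of_le_of_lt (m_nonneg x) hms
  obtain ⟨b, hbS, hbs⟩ := exists_lt_of_csInf_lt (Sset_nonempty h x) hms
  obtain ⟨r', hr', rfl, hψr'⟩ := hbS
  have hrr' : r ≤ r' := by
    have h1 : 1 / r' < s := hbs
    have h1' : 1 < s * r' := by
      have h2 := mul_lt_mul_of_pos_right h1 hr'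
      rwa [one_div_mul_cancel hr'.ne'] at h2
    have h2 : 1 / s < r' := by
      rw [div_lt_iff₀ hs]; linarith [mul_comm s r']
    have h3 : r ≤ 1 / s := by rw [le_div_iff₀ hs]; exact hrs
    linarith
  have hcross := psi_cross h (x := x) (y := x) (R := r') hr (by simp [dist_self]; linarith)
  have hfrac : r / r' ≤ r * s := by
    rw [div_le_iff₀ hr']
    have : 1 ≤ s * r' := by
      have h1 := mul_lt_mul_of_pos_right hbs hr'
      rw [one_div_mul_cancel hr'.ne'] at h1; linarith
    calc r = r * 1 := by ring
      _ ≤ r * (s * r') := by apply mul_le_mul_of_nonneg_left this hr.le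
      _ = r * s * r' := by ring
  have hC : 0 < C₁ := lt_of_lt_of_le one_pos h.hC
  calc psiFun d V x r ≤ C₁ * (r/r')^2 * psiFun d V x r' := hcross
    _ ≤ C₁ * (r/r')^2 * 1 := mul_le_mul_of_nonneg_left hψr' (by positivity)
    _ = C₁ * (r/r')^2 := by ring
    _ ≤ C₁ * (r*s)^2 := by
        apply mul_le_mul_of_nonneg_left _ hC.le
        apply pow_le_pow_left₀ (by positivity) hfrac
lemma one_lt_psi (h : Hyp d C₁ V) {x : Ed d} {r : ℝ} (hr : 0 < r)
    (h1 : 1 < r * mFun d V x) : 1 < psiFun d V x r := by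
  by_contra hc
  push_neg at hc
  have := m_le h hr hc
  have : r * mFun d V x ≤ 1 := by
    calc r * mFun d V x ≤ r * (1/r) := mul_le_mul_of_nonneg_left this hr.le
      _ = 1 := by field_simp
  linarith

lemma m_ge (h : Hyp d C₁ V) {x : Ed d} {s : ℝ} (hs : 0 < s)
    (hψ : C₁ < psiFun d V x s) : 1 / s ≤ mFun d V x := by
  by_contra hc
  push_neg at hc
  have := psi_le_sq h hs hc (by field_simp; norm_num)
  rw [mul_one_div, div_self hs.ne', one_pow, mul_one] at this
  linarith
/-- P1: `m(x) ≤ 4C₁² (1 + |x-y| m(x)) m(y)`, unconditionally. -/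
lemma P1 (h : Hyp d C₁ V) (x y : Ed d) :
    mFun d V x ≤ (4 * C₁^2) * (1 + dist x y * mFun d V x) * mFun d V y := by
  have hC : 1 ≤ C₁ := h.hC
  have hC0 : 0 < C₁ := lt_of_lt_of_le one_pos hC
  set m := mFun d V x with hmdef
  have hm : 0 < m := m_pos h x
  have hmy : 0 < mFun d V y := m_pos h y
  set δ := dist x y with hδdef
  have hδ : 0 ≤ δ := dist_nonneg
  set r : ℝ := 2 / m with hrdef
  set R2 : ℝ := 4 * C₁^2 / m with hR2def
  have hr : 0 < r := by positivity
  have hR2 : 0 < R2 := by positivity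
  have hs : 0 < R2 + δ := by positivity
  -- ψ(x,r) > 1
  have h1 : 1 < psiFun d V x r := one_lt_psi h hr (by rw [hrdef]; field_simp; rw [← hmdef]; linarith)
  -- ψ(x,R2) > 4 C₁³
  have h2 : 4 * C₁^3 < psiFun d V x R2 := by
    have hcross := psi_cross h (x := x) (y := x) (R := R2) hr
      (by simp only [dist_self, zero_add]; rw [hrdef, hR2def]
          gcongr <;> nlinarith)
    have hfrac : (r / R2)^2 = 1 / (4 * C₁^4) := by
      rw [hrdef, hR2def]
      field_simp
      ring
    rw [hfrac] at hcross
    have e : C₁ * (1 / (4 * C₁^4)) = 1 / (4 * C₁^3) := by field_simp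
    rw [e] at hcross
    have h12 : 1 < 1 / (4 * C₁^3) * psiFun d V x R2 := lt_of_lt_of_le h1 hcross
    rw [one_div_mul_eq_div, lt_div_iff₀ (by positivity : (0:ℝ) < 4*C₁^3), one_mul] at h12
    linarith
  -- ψ(y, R2 + δ) > C₁
  have h3 : C₁ < psiFun d V y (R2 + δ) := by
    have hcross := psi_cross h (x := y) (y := x) (R := R2 + δ) hR2
      (by rw [dist_comm]; linarith)
    have hψs : 0 ≤ psiFun d V y (R2 + δ) := psi_nonneg h y hs
    have hfr : (R2 / (R2 + δ))^2 ≤ 1 := by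
      apply pow_le_one₀ (by positivity)
      rw [div_le_one hs]; linarith
    have : psiFun d V x R2 ≤ C₁ * psiFun d V y (R2 + δ) := by
      calc psiFun d V x R2 ≤ C₁ * (R2/(R2+δ))^2 * psiFun d V y (R2+δ) := hcross
        _ ≤ C₁ * 1 * psiFun d V y (R2+δ) := by
            apply mul_le_mul_of_nonneg_right _ hψs
            apply mul_le_mul_of_nonneg_left hfr hC0.le
        _ = C₁ * psiFun d V y (R2+δ) := by ring
    nlinarith [h2, this]
  have h4 : 1 / (R2 + δ) ≤ mFun d V y := m_ge h hs h3
  -- conclude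
  have h5 : 1 ≤ (R2 + δ) * mFun d V y := by
    rw [div_le_iff₀ hs] at h4; linarith [mul_comm (mFun d V y) (R2 + δ)]
  have h6 : m * (R2 + δ) = 4 * C₁^2 + m * δ := by
    rw [hR2def]; field_simp
  calc m = m * 1 := (mul_one m).symm
    _ ≤ m * ((R2 + δ) * mFun d V y) := mul_le_mul_of_nonneg_left h5 hm.le
    _ = (4 * C₁^2 + m * δ) * mFun d V y := by rw [← mul_assoc, h6]
    _ ≤ (4 * C₁^2) * (1 + δ * m) * mFun d V y := by
        apply mul_le_mul_of_nonneg_right _ hmy.le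
        have : 0 ≤ δ * m * (4 * C₁^2 - 1) :=
          mul_nonneg (mul_nonneg hδ hm.le) (by nlinarith)
        nlinarith
lemma doubling_step (h : Hyp d C₁ V) {t : ℝ} (ht1 : 1 < t)
    (htd : t ^ d * (1 - (2*C₁)⁻¹) = 1) (x : Ed d) {r : ℝ} (hr : 0 < r) :
    In d V x (t * r) ≤ 2 * In d V x r := by
  have hC0 : 0 < C₁ := lt_of_lt_of_le one_pos h.hC
  have htr : 0 < t * r := by positivity
  have hsub : ball x r ⊆ ball x (t*r) := ball_subset_ball (by nlinarith)
  set A := ball x (t*r) \ ball x r with hAdef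
  have hA_meas : MeasurableSet A := measurableSet_ball.diff measurableSet_ball
  have hunion : ball x (t*r) = ball x r ∪ A := (union_diff_cancel hsub).symm
  have hdisj : Disjoint (ball x r) A := disjoint_sdiff_right
  have hsplit : In d V x (t*r) = In d V x r + ∫ y in A, V y := by
    rw [In, hunion, setIntegral_union hdisj hA_meas]
    · rfl
    · exact (intOn h x (t*r)).mono_set (hunion ▸ subset_union_left)
    · exact (intOn h x (t*r)).mono_set diff_subset
  have hκ := kappa_pos h
  set κ := (volume (ball (0 : Ed d) 1)).toReal with hκdef
  have hvA : (volume A).toReal = ((t*r)^d - r^d) * κ := by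
    rw [hAdef, measure_diff hsub measurableSet_ball.nullMeasurableSet measure_ball_lt_top.ne,
      ENNReal.toReal_sub_of_le (measure_mono hsub) measure_ball_lt_top.ne,
      vol_ball h x htr.le, vol_ball h x hr.le]
    ring
  have hu : (0:ℝ) < t^d := by positivity
  have h2C : 2*C₁*(t^d - 1) = t^d := by
    field_simp at htd; linarith
  have hIpos := (In_pos h x htr).le
  have hbound : ∫ y in A, V y ≤ (1/2) * In d V x (t*r) := by
    have hb := In_le_const h htr (diff_subset : A ⊆ ball x (t*r)) hA_meas
    have hscal : (volume A).toReal * (C₁ * (((volume (ball x (t*r)))).toReal⁻¹)) = 1/2 := by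
      rw [hvA, vol_ball h x htr.le, mul_pow, ← hκdef]
      have hrd : (0:ℝ) < r^d := by positivity
      field_simp
      nlinarith [h2C, mul_pos hrd hκ, hu]
    calc ∫ y in A, V y
        ≤ (volume A).toReal * (C₁ * ((volume (ball x (t*r))).toReal⁻¹ * In d V x (t*r))) := hb
      _ = ((volume A).toReal * (C₁ * ((volume (ball x (t*r))).toReal⁻¹))) * In d V x (t*r) := by
          ring
      _ = (1/2) * In d V x (t*r) := by rw [hscal]
  linarith [hsplit, hbound]
lemma doubling_iter (h : Hyp d C₁ V) {t : ℝ} (ht1 : 1 < t)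
    (htd : t ^ d * (1 - (2*C₁)⁻¹) = 1) (x : Ed d) {r : ℝ} (hr : 0 < r) (n : ℕ) :
    In d V x (t^n * r) ≤ 2^n * In d V x r := by
  induction n with
  | zero => simp
  | succ n ih =>
    have h1 : In d V x (t^(n+1) * r) = In d V x (t * (t^n * r)) := by ring_nf
    have h2 : In d V x (t * (t^n * r)) ≤ 2 * In d V x (t^n * r) :=
      doubling_step h ht1 htd x (by positivity)
    calc In d V x (t^(n+1) * r) ≤ 2 * In d V x (t^n * r) := h1 ▸ h2
      _ ≤ 2 * (2^n * In d V x r) := by linarith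
      _ = 2^(n+1) * In d V x r := by ring

lemma In_double (h : Hyp d C₁ V) {t : ℝ} {N : ℕ} (ht1 : 1 < t)
    (htd : t ^ d * (1 - (2*C₁)⁻¹) = 1) (htN : 2 ≤ t ^ N)
    (x : Ed d) {r : ℝ} (hr : 0 < r) :
    In d V x (2 * r) ≤ 2^N * In d V x r := by
  calc In d V x (2 * r) ≤ In d V x (t^N * r) :=
      In_mono h x (by nlinarith)
    _ ≤ 2^N * In d V x r := doubling_iter h ht1 htd x hr N

lemma In_dyadic (h : Hyp d C₁ V) {t : ℝ} {N : ℕ} (ht1 : 1 < t)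
    (htd : t ^ d * (1 - (2*C₁)⁻¹) = 1) (htN : 2 ≤ t ^ N)
    (x : Ed d) {r : ℝ} (hr : 0 < r) (n : ℕ) :
    In d V x (2^n * r) ≤ ((2:ℝ)^N)^n * In d V x r := by
  induction n with
  | zero => simp
  | succ n ih =>
    have h1 : (2:ℝ)^(n+1) * r = 2 * (2^n * r) := by ring
    calc In d V x (2^(n+1) * r) = In d V x (2 * (2^n * r)) := by rw [h1]
      _ ≤ 2^N * In d V x (2^n * r) := In_double h ht1 htd htN x (by positivity)
      _ ≤ 2^N * (((2:ℝ)^N)^n * In d V x r) := by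
          apply mul_le_mul_of_nonneg_left ih (by positivity)
      _ = ((2:ℝ)^N)^(n+1) * In d V x r := by ring

lemma exists_pow2 {q : ℝ} (hq : 1 ≤ q) : ∃ n : ℕ, q ≤ 2^n ∧ (2:ℝ)^n ≤ 2*q := by
  obtain ⟨n, hn⟩ := pow_unbounded_of_one_lt q (one_lt_two (α := ℝ))
  have hP : ∃ n : ℕ, q ≤ 2^n := ⟨n, hn.le⟩
  classical
  set n₀ := Nat.find hP with hn₀
  refine ⟨n₀, Nat.find_spec hP, ?_⟩
  rcases Nat.eq_zero_or_pos n₀ with h0 | h0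
  · rw [h0]; norm_num; linarith
  · have hlt : ¬ q ≤ 2^(n₀ - 1) := Nat.find_min hP (by omega)
    push_neg at hlt
    have : (2:ℝ)^n₀ = 2 * 2^(n₀-1) := by
      rw [← pow_succ']
      congr 1
      omega
    rw [this]
    nlinarith
lemma psi_growth (h : Hyp d C₁ V) {t : ℝ} {N : ℕ} (ht1 : 1 < t)
    (htd : t ^ d * (1 - (2*C₁)⁻¹) = 1) (htN : 2 ≤ t ^ N)
    (x : Ed d) {r R : ℝ} (hr : 0 < r) (hrR : r ≤ R) :
    psiFun d V x R ≤ 2^N * (R/r)^N * psiFun d V x r := by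
  have hR : 0 < R := lt_of_lt_of_le hr hrR
  set q := R / r with hqdef
  have hq1 : 1 ≤ q := (one_le_div hr).2 hrR
  obtain ⟨n, hq2n, h2n2q⟩ := exists_pow2 hq1
  have hIr := (In_pos h x hr).le
  have hInR : In d V x R ≤ (2*q)^N * In d V x r := by
    have h1 : In d V x R ≤ In d V x (2^n * r) := by
      apply In_mono h x
      calc R = q * r := by rw [hqdef]; field_simp
        _ ≤ 2^n * r := mul_le_mul_of_nonneg_right hq2n hr.le
    have h2 := In_dyadic h ht1 htd htN x hr n
    have h3 : ((2:ℝ)^N)^n = ((2:ℝ)^n)^N := by rw [← pow_mul, ← pow_mul, Nat.mul_comm]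
    have h4 : ((2:ℝ)^n)^N ≤ (2*q)^N := pow_le_pow_left₀ (by positivity) h2n2q N
    calc In d V x R ≤ ((2:ℝ)^N)^n * In d V x r := le_trans h1 h2
      _ = ((2:ℝ)^n)^N * In d V x r := by rw [h3]
      _ ≤ (2*q)^N * In d V x r := mul_le_mul_of_nonneg_right h4 hIr
  have hexp : (2:ℝ) - (d:ℝ) ≤ 0 := by
    have : (3:ℝ) ≤ (d:ℝ) := by exact_mod_cast h.hd
    linarith
  have hrpow : R ^ ((2:ℝ) - (d:ℝ)) ≤ r ^ ((2:ℝ) - (d:ℝ)) :=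
    Real.rpow_le_rpow_of_nonpos hr hrR hexp
  calc psiFun d V x R = R ^ ((2:ℝ) - (d:ℝ)) * In d V x R := rfl
    _ ≤ R ^ ((2:ℝ) - (d:ℝ)) * ((2*q)^N * In d V x r) :=
        mul_le_mul_of_nonneg_left hInR (Real.rpow_pos_of_pos hR _).le
    _ ≤ r ^ ((2:ℝ) - (d:ℝ)) * ((2*q)^N * In d V x r) :=
        mul_le_mul_of_nonneg_right hrpow (by positivity)
    _ = 2^N * q^N * (r ^ ((2:ℝ) - (d:ℝ)) * In d V x r) := by rw [mul_pow]; ring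
    _ = 2^N * (R/r)^N * psiFun d V x r := rfl
/-- P2: `m(y) ≤ C₁ 2^{k+1} (1 + |x-y| m(x))^k m(x)`, unconditionally. -/
lemma P2 (h : Hyp d C₁ V) {t : ℝ} {k : ℕ} (ht1 : 1 < t)
    (htd : t ^ d * (1 - (2*C₁)⁻¹) = 1) (htN : 2 ≤ t ^ (k+1)) (x y : Ed d) :
    mFun d V y ≤ (C₁ * 2^(k+1)) * (1 + dist x y * mFun d V x)^k * mFun d V x := by
  have hC : 1 ≤ C₁ := h.hC
  have hC0 : 0 < C₁ := lt_of_lt_of_le one_pos hC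
  set m := mFun d V x with hmdef
  have hm : 0 < m := m_pos h x
  set δ := dist x y with hδdef
  have hδ : 0 ≤ δ := dist_nonneg
  set T : ℝ := 1 + δ * m with hTdef
  have hT1 : 1 ≤ T := by nlinarith
  have hT0 : 0 < T := by linarith
  set N := k + 1 with hNdef
  have hTN1 : 1 ≤ T^N := one_le_pow₀ hT1
  -- base bound at r₀ = 1/(2m)
  have hr₀ : (0:ℝ) < 1/(2*m) := by positivity
  have hbase : psiFun d V x (1/(2*m)) ≤ C₁ := by
    have := psi_le_sq h (r := 1/(2*m)) (s := 2*m) hr₀ (by nlinarith) (by field_simp; norm_num)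
    calc psiFun d V x (1/(2*m)) ≤ C₁ * ((1/(2*m)) * (2*m))^2 := this
      _ = C₁ := by field_simp
  -- growth up to R' = T/m
  set R' : ℝ := T/m with hR'def
  have hR'0 : 0 < R' := by positivity
  have hr₀R' : 1/(2*m) ≤ R' := by
    rw [hR'def, div_le_div_iff₀ (by positivity) hm]; nlinarith
  have hgrow : psiFun d V x R' ≤ C₁ * 4^N * T^N := by
    have hg := psi_growth h ht1 htd htN x hr₀ hr₀R'
    have hfrac : R' / (1/(2*m)) = 2*T := by rw [hR'def]; field_simp
    rw [hfrac] at hg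
    have h4 : (4:ℝ)^N = 2^N * 2^N := by
      rw [show (4:ℝ) = 2*2 by norm_num, mul_pow]
    calc psiFun d V x R' ≤ 2^N * (2*T)^N * psiFun d V x (1/(2*m)) := hg
      _ ≤ 2^N * (2*T)^N * C₁ := by
          apply mul_le_mul_of_nonneg_left hbase (by positivity)
      _ = C₁ * 4^N * T^N := by rw [mul_pow, h4]; ring
  -- choose small radius r
  set B : ℝ := C₁ * 2^N * T^N with hBdef
  have hB0 : 0 < B := by positivity
  have hP : (1:ℝ) ≤ C₁ * 2^N := by
    have h1 : (1:ℝ) ≤ 2^N := one_le_pow₀ one_le_two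
    nlinarith
  have hB1 : 1 ≤ B := by
    nlinarith [mul_le_mul hP hTN1 zero_le_one (by positivity : (0:ℝ) ≤ C₁ * 2^N)]
  set r : ℝ := R' / B with hrdef
  have hr : 0 < r := by positivity
  have hrsmall : δ + r ≤ R' := by
    have hTB : T ≤ B := by
      calc T ≤ T^N := le_self_pow₀ hT1 (by omega)
        _ ≤ C₁ * 2^N * T^N := by nlinarith [pow_nonneg hT0.le N]
        _ = B := hBdef.symm
    have h1 : r ≤ 1/m := by
      have hre : r = T / (m * B) := by rw [hrdef, hR'def, div_div]
      rw [hre, div_le_div_iff₀ (by positivity) hm]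
      nlinarith
    have h2 : R' - δ = 1/m := by rw [hR'def, hTdef]; field_simp; ring
    linarith
  have hcross := psi_cross h (x := x) (y := y) (R := R') hr (by exact hrsmall)
  have hψsmall : psiFun d V y r ≤ 1 := by
    have hfr : r / R' = B⁻¹ := by
      rw [hrdef, div_div, mul_comm B R', ← div_div, div_self hR'0.ne', one_div]
    have hval : C₁ * (B⁻¹)^2 * (C₁ * 4^N * T^N) = (T^N)⁻¹ := by
      have h4 : (4:ℝ)^N = 2^N * 2^N := by
        rw [show (4:ℝ) = 2*2 by norm_num, mul_pow]
      rw [hBdef, h4]; field_simp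
    calc psiFun d V y r ≤ C₁ * (r/R')^2 * psiFun d V x R' := hcross
      _ ≤ C₁ * (r/R')^2 * (C₁ * 4^N * T^N) := by
          apply mul_le_mul_of_nonneg_left hgrow (by positivity)
      _ = (T^N)⁻¹ := by rw [hfr, hval]
      _ ≤ 1 := by
          rw [inv_le_one_iff₀]; right; exact hTN1
  have hmy := m_le h hr hψsmall
  have hinv : 1 / r = C₁ * 2^N * T^k * m := by
    calc 1/r = B * m / T := by rw [hrdef, one_div_div, hR'def, div_div_eq_mul_div]
      _ = C₁ * 2^N * T^k * m * (T / T) := by rw [hBdef, pow_succ]; ring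
      _ = C₁ * 2^N * T^k * m := by rw [div_self hT0.ne', mul_one]
  calc mFun d V y ≤ 1/r := hmy
    _ = (C₁ * 2^(k+1)) * T^k * m := by rw [hinv]
/-- Pure algebra: combining the two master estimates. -/
lemma algebraQ {A δ mx my : ℝ} {k : ℕ} (hA : 1 ≤ A) (hmx : 0 < mx) (hmy : 0 < my)
    (hδ : 0 ≤ δ) (h1 : mx ≤ A * (1 + δ*mx) * my) (h2 : mx ≤ A * (1 + δ*my)^k * my) :
    mx^(k+1) ≤ (2*A)^(k+1) * (1 + δ*mx)^k * my^(k+1) := by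
  set Tx := 1 + δ*mx with hTxdef
  set Ty := 1 + δ*my with hTydef
  have hTx1 : 1 ≤ Tx := by
    have := mul_nonneg hδ hmx.le; rw [hTxdef]; linarith
  have hTy1 : 1 ≤ Ty := by
    have := mul_nonneg hδ hmy.le; rw [hTydef]; linarith
  have hTx0 : 0 < Tx := by linarith
  have hTy0 : 0 < Ty := by linarith
  have hAk : A^(k+1) ≤ (2*A)^(k+1) := pow_le_pow_left₀ (by linarith) (by linarith) _
  by_cases hcase : Ty^(k+1) ≤ Tx
  · have s1 : mx^(k+1) ≤ (A * Ty^k * my)^(k+1) :=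
      pow_le_pow_left₀ hmx.le h2 _
    have s2 : (A * Ty^k * my)^(k+1) = A^(k+1) * (Ty^(k+1))^k * my^(k+1) := by
      rw [mul_pow, mul_pow, ← pow_mul, ← pow_mul, Nat.mul_comm]
    have s3 : (Ty^(k+1))^k ≤ Tx^k := pow_le_pow_left₀ (by positivity) hcase _
    calc mx^(k+1) ≤ A^(k+1) * (Ty^(k+1))^k * my^(k+1) := by rw [← s2]; exact s1
      _ ≤ A^(k+1) * Tx^k * my^(k+1) := by
          apply mul_le_mul_of_nonneg_right _ (by positivity)
          exact mul_le_mul_of_nonneg_left s3 (by positivity)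
      _ ≤ (2*A)^(k+1) * Tx^k * my^(k+1) := by
          apply mul_le_mul_of_nonneg_right _ (by positivity)
          exact mul_le_mul_of_nonneg_right hAk (by positivity)
  · push_neg at hcase
    by_cases hcase2 : Ty ≤ 2
    · have hTxb : Tx ≤ 2^(k+1) := by
        calc Tx ≤ Ty^(k+1) := hcase.le
          _ ≤ 2^(k+1) := pow_le_pow_left₀ hTy0.le hcase2 _
      have s1 : mx^(k+1) ≤ (A * Tx * my)^(k+1) := pow_le_pow_left₀ hmx.le h1 _
      have s2 : (A * Tx * my)^(k+1) = A^(k+1) * Tx^k * my^(k+1) * Tx := by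
        rw [mul_pow, mul_pow, pow_succ Tx k]; ring
      calc mx^(k+1) ≤ A^(k+1) * Tx^k * my^(k+1) * Tx := by rw [← s2]; exact s1
        _ ≤ A^(k+1) * Tx^k * my^(k+1) * 2^(k+1) := by
            apply mul_le_mul_of_nonneg_left hTxb (by positivity)
        _ = (2*A)^(k+1) * Tx^k * my^(k+1) := by rw [mul_pow]; ring
    · push_neg at hcase2
      have hδ0 : 0 < δ * my := by nlinarith
      have hδpos : 0 < δ := by
        rcases hδ.lt_or_eq with h | h
        · exact h
        · exfalso; rw [← h] at hδ0; simp at hδ0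
      have s3 : Ty ≤ 2*(δ*my) := by nlinarith
      have s1 : (δ*mx)^(k+1) ≤ Tx^(k+1) := pow_le_pow_left₀ (by positivity) (by nlinarith) _
      have s2 : Tx^(k+1) ≤ Tx^k * (2*(δ*my))^(k+1) := by
        calc Tx^(k+1) = Tx^k * Tx := pow_succ Tx k
          _ ≤ Tx^k * Ty^(k+1) := mul_le_mul_of_nonneg_left hcase.le (by positivity)
          _ ≤ Tx^k * (2*(δ*my))^(k+1) := by
              apply mul_le_mul_of_nonneg_left (pow_le_pow_left₀ hTy0.le s3 _) (by positivity)
      have s4 : δ^(k+1) * mx^(k+1) ≤ δ^(k+1) * (2^(k+1) * Tx^k * my^(k+1)) := by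
        calc δ^(k+1) * mx^(k+1) = (δ*mx)^(k+1) := (mul_pow δ mx (k+1)).symm
          _ ≤ Tx^k * (2*(δ*my))^(k+1) := le_trans s1 s2
          _ = δ^(k+1) * (2^(k+1) * Tx^k * my^(k+1)) := by
              rw [mul_pow, mul_pow]; ring
      have s5 : mx^(k+1) ≤ 2^(k+1) * Tx^k * my^(k+1) :=
        le_of_mul_le_mul_left s4 (by positivity)
      calc mx^(k+1) ≤ 2^(k+1) * Tx^k * my^(k+1) := s5
        _ ≤ (2*A)^(k+1) * Tx^k * my^(k+1) := by
            apply mul_le_mul_of_nonneg_right _ (by positivity)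
            apply mul_le_mul_of_nonneg_right _ (by positivity)
            exact pow_le_pow_left₀ (by norm_num) (by linarith) _

/-- Taking `(k+1)`-th roots. -/
lemma root_ineq {mx my Tx B : ℝ} {k : ℕ} (hmx : 0 ≤ mx) (hmy : 0 ≤ my)
    (hT : 1 ≤ Tx) (hB : 0 ≤ B)
    (hQ : mx^(k+1) ≤ B^(k+1) * Tx^k * my^(k+1)) :
    mx ≤ B * Tx ^ ((k:ℝ)/((k:ℝ)+1)) * my := by
  have hTx0 : (0:ℝ) < Tx := lt_of_lt_of_le one_pos hT
  set θ := (k:ℝ)/((k:ℝ)+1) with hθdef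
  have hθ0 : 0 ≤ θ := by positivity
  have hpow : (Tx^θ)^(k+1) = Tx^k := by
    rw [← Real.rpow_natCast (Tx^θ) (k+1), ← Real.rpow_mul hTx0.le]
    have : θ * ((k+1:ℕ):ℝ) = (k:ℝ) := by
      rw [hθdef]; push_cast; field_simp
    rw [this, Real.rpow_natCast]
  apply le_of_pow_le_pow_left₀ (Nat.succ_ne_zero k) (by positivity : (0:ℝ) ≤ B * Tx^θ * my)
  calc mx^(k+1) ≤ B^(k+1) * Tx^k * my^(k+1) := hQ
    _ = (B * Tx^θ * my)^(k+1) := by rw [mul_pow, mul_pow, hpow]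
end Shen

set_option maxHeartbeats 1000000

/-- the standard comparison estimates for `m(·,V)`:
there are `C, c, k₀ > 0` depending only on `d, C₀` such that (i) `m(x,V) ∼ m(y,V)`
when `|x-y| ≤ C/m(x,V)`, and the two-sided polynomial comparison estimates
(ii), (iii) hold. -/
theorem stmt3 (d : ℕ) (hd : 3 ≤ d) (C₀ : ℝ) (hC₀ : 0 < C₀) :
    ∃ C c k₀ : ℝ, 0 < C ∧ 0 < c ∧ 0 < k₀ ∧
      ∀ V : Ed d → ℝ, GoodV d C₀ V → ¬ (V =ᵐ[volume] 0) → ∀ x y : Ed d,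
        (dist x y ≤ C / mFun d V x →
          c * mFun d V y ≤ mFun d V x ∧ mFun d V x ≤ C * mFun d V y) ∧
        (c * (1 + dist x y * mFun d V x) ^ (-k₀) ≤ mFun d V x / mFun d V y ∧
          mFun d V x / mFun d V y ≤
            C * (1 + dist x y * mFun d V x) ^ (k₀ / (k₀ + 1))) ∧
        (c * (1 + dist x y * mFun d V y) ^ (1 / (k₀ + 1)) ≤
            1 + dist x y * mFun d V x ∧
          1 + dist x y * mFun d V x ≤
            C * (1 + dist x y * mFun d V y) ^ (k₀ + 1)) := by
  classical
  set C₁ := max C₀ 1 with hC₁def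
  have hC₁ : 1 ≤ C₁ := le_max_right _ _
  have hC₁0 : 0 < C₁ := lt_of_lt_of_le one_pos hC₁
  have hd0 : (0:ℝ) < (d:ℝ) := by
    have : 0 < d := by omega
    exact_mod_cast this
  set u : ℝ := 1 - (2*C₁)⁻¹ with hudef
  have hu0 : 0 < u := by
    have h1 : (2*C₁)⁻¹ < 1 := by
      rw [inv_lt_one_iff₀]; right; linarith
    rw [hudef]; linarith
  have hu1 : u < 1 := by
    have : 0 < (2*C₁)⁻¹ := by positivity
    rw [hudef]; linarith
  set t : ℝ := u ^ (-(d:ℝ)⁻¹) with htdef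
  have ht1 : 1 < t := by
    rw [htdef]
    exact (Real.one_lt_rpow_iff_of_pos hu0).2 (Or.inr ⟨hu1, by
      simp only [Left.neg_neg_iff]; positivity⟩)
  have htpow : t ^ d = u⁻¹ := by
    rw [htdef, ← Real.rpow_natCast (u ^ (-(d:ℝ)⁻¹)) d, ← Real.rpow_mul hu0.le]
    have he : (-(d:ℝ)⁻¹) * ((d:ℕ):ℝ) = -1 := by field_simp
    rw [he, Real.rpow_neg_one]
  have htd : t ^ d * (1 - (2*C₁)⁻¹) = 1 := by
    rw [← hudef, htpow]; exact inv_mul_cancel₀ hu0.ne'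
  obtain ⟨N₀, hN₀⟩ := pow_unbounded_of_one_lt (2:ℝ) ht1
  set k := max N₀ 1 with hkdef
  have hk1 : 1 ≤ k := le_max_right _ _
  have htN : 2 ≤ t ^ (k+1) := by
    calc (2:ℝ) ≤ t ^ N₀ := hN₀.le
      _ ≤ t ^ (k+1) := pow_le_pow_right₀ ht1.le (by omega)
  have h2k1 : (0:ℝ) < 2^(k+1) := by positivity
  set A : ℝ := 4*C₁^2 + C₁*2^(k+1) with hAdef
  have hsq : (1:ℝ) ≤ C₁^2 := one_le_pow₀ hC₁
  have hpos2 : (0:ℝ) < C₁*2^(k+1) := by positivity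
  have hpos1 : (0:ℝ) < 4*C₁^2 := by positivity
  have hA1 : 1 ≤ A := by rw [hAdef]; linarith
  have hA0 : 0 < A := lt_of_lt_of_le one_pos hA1
  have h4A : 4*C₁^2 ≤ A := by rw [hAdef]; linarith
  have hCA : C₁*2^(k+1) ≤ A := by rw [hAdef]; linarith
  set B : ℝ := 2*A with hBdef
  have hB1 : 1 ≤ B := by rw [hBdef]; linarith
  set C : ℝ := (2*B)^(k+1) with hCdef
  have hC1 : 1 ≤ C := one_le_pow₀ (by linarith)
  have hCpos : 0 < C := lt_of_lt_of_le one_pos hC1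
  set c : ℝ := (((1+A)*(1+C))^(k+1))⁻¹ with hcdef
  have hAC1 : 1 ≤ (1+A)*(1+C) := by
    calc (1:ℝ) = 1*1 := (one_mul 1).symm
      _ ≤ (1+A)*(1+C) := mul_le_mul (by linarith) (by linarith) one_pos.le (by linarith)
  have hcpos : 0 < c := by rw [hcdef]; positivity
  have hcinv : c * ((1+A)*(1+C))^(k+1) = 1 := by
    rw [hcdef]; exact inv_mul_cancel₀ (by positivity)
  -- key smallness facts about c
  have hcA1 : c * A ≤ 1 := by
    have h1 : A ≤ ((1+A)*(1+C))^(k+1) := by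
      calc A ≤ (1+A)*(1+C) := by
            calc A ≤ (1+A)*1 := by rw [mul_one]; linarith
              _ ≤ (1+A)*(1+C) := mul_le_mul_of_nonneg_left (by linarith) (by linarith)
        _ ≤ ((1+A)*(1+C))^(k+1) := le_self_pow₀ hAC1 (Nat.succ_ne_zero k)
    calc c * A ≤ c * ((1+A)*(1+C))^(k+1) := mul_le_mul_of_nonneg_left h1 hcpos.le
      _ = 1 := hcinv
  have hc1A : c * (1+A) ≤ 1 := by
    have h1 : 1+A ≤ ((1+A)*(1+C))^(k+1) := by
      calc 1+A ≤ (1+A)*(1+C) := by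
            calc 1+A = (1+A)*1 := (mul_one _).symm
              _ ≤ (1+A)*(1+C) := mul_le_mul_of_nonneg_left (by linarith) (by linarith)
        _ ≤ ((1+A)*(1+C))^(k+1) := le_self_pow₀ hAC1 (Nat.succ_ne_zero k)
    calc c * (1+A) ≤ c * ((1+A)*(1+C))^(k+1) := mul_le_mul_of_nonneg_left h1 hcpos.le
      _ = 1 := hcinv
  have hcACk : c * (A * (1+C)^k) ≤ 1 := by
    have h1 : A * (1+C)^k ≤ ((1+A)*(1+C))^(k+1) := by
      rw [mul_pow]
      have e1 : A ≤ (1+A)^(k+1) := by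
        calc A ≤ 1+A := by linarith
          _ ≤ (1+A)^(k+1) := le_self_pow₀ (by linarith) (Nat.succ_ne_zero k)
      have e2 : (1+C)^k ≤ (1+C)^(k+1) := pow_le_pow_right₀ (by linarith) (by omega)
      exact mul_le_mul e1 e2 (by positivity) (by positivity)
    calc c * (A * (1+C)^k) ≤ c * ((1+A)*(1+C))^(k+1) := mul_le_mul_of_nonneg_left h1 hcpos.le
      _ = 1 := hcinv
  refine ⟨C, c, (k:ℝ), hCpos, hcpos, by exact_mod_cast (by omega : 0 < k), ?_⟩
  intro V hGood hnz x y
  obtain ⟨hmeas, hloc, hpos, hBinf⟩ := hGood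
  have hB' : BInfty d C₁ V := by
    intro x' r' hr'
    refine (hBinf x' r' hr').mono fun z hz => le_trans hz ?_
    have havg : 0 ≤ ⨍ w in ball x' r', V w := by
      rw [setAverage_eq, smul_eq_mul]
      have h1 : 0 ≤ ∫ w in ball x' r', V w :=
        setIntegral_nonneg_ae measurableSet_ball (hpos.mono fun _ h _ => h.le)
      positivity
    exact mul_le_mul_of_nonneg_right (le_max_left _ _) havg
  have h : Shen.Hyp d C₁ V := ⟨hd, hmeas, hloc, hpos, hC₁, hB'⟩
  set mx := mFun d V x with hmxdef
  set my := mFun d V y with hmydef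
  set δ := dist x y with hδdef
  have hmx : 0 < mx := Shen.m_pos h x
  have hmy : 0 < my := Shen.m_pos h y
  have hδ : 0 ≤ δ := dist_nonneg
  set Tx : ℝ := 1 + δ * mx with hTxdef
  set Ty : ℝ := 1 + δ * my with hTydef
  have hTx1 : 1 ≤ Tx := by
    have := mul_nonneg hδ hmx.le; rw [hTxdef]; linarith
  have hTy1 : 1 ≤ Ty := by
    have := mul_nonneg hδ hmy.le; rw [hTydef]; linarith
  have hTx0 : 0 < Tx := by linarith
  have hTy0 : 0 < Ty := by linarith
  have hTxk0 : (0:ℝ) < Tx^k := by positivity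
  -- master estimates
  have hP1 : mx ≤ A * Tx * my := by
    calc mx ≤ (4*C₁^2) * Tx * my := Shen.P1 h x y
      _ ≤ A * Tx * my := by
          apply mul_le_mul_of_nonneg_right _ hmy.le
          exact mul_le_mul_of_nonneg_right h4A hTx0.le
  have hP2 : my ≤ A * Tx^k * mx := by
    calc my ≤ (C₁ * 2^(k+1)) * Tx^k * mx := Shen.P2 h ht1 htd htN x y
      _ ≤ A * Tx^k * mx := by
          apply mul_le_mul_of_nonneg_right _ hmx.le
          exact mul_le_mul_of_nonneg_right hCA (by positivity)
  have hP1s : my ≤ A * Ty * mx := by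
    have h0 := Shen.P1 h y x
    rw [dist_comm y x] at h0
    calc my ≤ (4*C₁^2) * Ty * mx := h0
      _ ≤ A * Ty * mx := by
          apply mul_le_mul_of_nonneg_right _ hmx.le
          exact mul_le_mul_of_nonneg_right h4A hTy0.le
  have hP2s : mx ≤ A * Ty^k * my := by
    have h0 := Shen.P2 h ht1 htd htN y x
    rw [dist_comm y x] at h0
    calc mx ≤ (C₁ * 2^(k+1)) * Ty^k * my := h0
      _ ≤ A * Ty^k * my := by
          apply mul_le_mul_of_nonneg_right _ hmy.le
          exact mul_le_mul_of_nonneg_right hCA (by positivity)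
  have hQ : mx^(k+1) ≤ B^(k+1) * Tx^k * my^(k+1) := by
    rw [hBdef]
    exact Shen.algebraQ hA1 hmx hmy hδ hP1 hP2s
  have hroot : mx ≤ B * Tx ^ ((k:ℝ)/((k:ℝ)+1)) * my :=
    Shen.root_ineq hmx.le hmy.le hTx1 (by linarith) hQ
  -- (iii)-type polynomial bounds
  have hG3 : Tx ≤ (1+A) * Ty^(k+1) := by
    have h1 : δ * mx ≤ A * Ty^k * (δ * my) := by
      calc δ * mx ≤ δ * (A * Ty^k * my) := mul_le_mul_of_nonneg_left hP2s hδ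
        _ = A * Ty^k * (δ * my) := by ring
    have h2 : δ * my ≤ Ty := by rw [hTydef]; linarith
    have h3 : δ * mx ≤ A * Ty^(k+1) := by
      calc δ * mx ≤ A * Ty^k * Ty := by
            refine le_trans h1 (mul_le_mul_of_nonneg_left h2 (by positivity))
        _ = A * Ty^(k+1) := by rw [pow_succ]; ring
    have h4 : (1:ℝ) ≤ Ty^(k+1) := one_le_pow₀ hTy1
    have h5 : (0:ℝ) ≤ A * Ty^(k+1) := by positivity
    rw [hTxdef]; linarith
  have hG3s : Ty ≤ (1+A) * Tx^(k+1) := by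
    have h1 : δ * my ≤ A * Tx^k * (δ * mx) := by
      calc δ * my ≤ δ * (A * Tx^k * mx) := mul_le_mul_of_nonneg_left hP2 hδ
        _ = A * Tx^k * (δ * mx) := by ring
    have h2 : δ * mx ≤ Tx := by rw [hTxdef]; linarith
    have h3 : δ * my ≤ A * Tx^(k+1) := by
      calc δ * my ≤ A * Tx^k * Tx := by
            refine le_trans h1 (mul_le_mul_of_nonneg_left h2 (by positivity))
        _ = A * Tx^(k+1) := by rw [pow_succ]; ring
    have h4 : (1:ℝ) ≤ Tx^(k+1) := one_le_pow₀ hTx1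
    have h5 : (0:ℝ) ≤ A * Tx^(k+1) := by positivity
    rw [hTydef]; linarith
  have hBC : B ≤ C := by
    rw [hCdef]
    calc B ≤ 2*B := by linarith
      _ ≤ (2*B)^(k+1) := le_self_pow₀ (by linarith) (Nat.succ_ne_zero k)
  have h1AC : 1 + A ≤ C := by
    rw [hCdef]
    calc 1 + A ≤ 2*B := by rw [hBdef]; linarith
      _ ≤ (2*B)^(k+1) := le_self_pow₀ (by linarith) (Nat.succ_ne_zero k)
  -- θ facts
  set θ : ℝ := (k:ℝ)/((k:ℝ)+1) with hθdef
  have hθ0 : 0 ≤ θ := by positivity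
  have hθ1 : θ ≤ 1 := by
    rw [hθdef, div_le_one (by positivity)]; linarith
  refine ⟨?_, ⟨?_, ?_⟩, ?_, ?_⟩
  · -- (i)
    intro hdist
    have hδC : δ * mx ≤ C := (le_div_iff₀ hmx).1 hdist
    have hTxC : Tx ≤ 1 + C := by rw [hTxdef]; linarith
    constructor
    · -- c * my ≤ mx
      have hTk : Tx^k ≤ (1+C)^k := pow_le_pow_left₀ hTx0.le hTxC k
      calc c * my ≤ c * (A * (1+C)^k * mx) := by
            apply mul_le_mul_of_nonneg_left _ hcpos.le
            calc my ≤ A * Tx^k * mx := hP2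
              _ ≤ A * (1+C)^k * mx := by
                  apply mul_le_mul_of_nonneg_right _ hmx.le
                  exact mul_le_mul_of_nonneg_left hTk hA0.le
        _ = (c * (A * (1+C)^k)) * mx := by ring
        _ ≤ 1 * mx := mul_le_mul_of_nonneg_right hcACk hmx.le
        _ = mx := one_mul mx
    · -- mx ≤ C * my
      have hCθ : C ^ θ = (2*B)^k := by
        rw [hCdef, ← Real.rpow_natCast (2*B) (k+1), ← Real.rpow_mul (by linarith : (0:ℝ) ≤ 2*B)]
        have he : ((k+1:ℕ):ℝ) * θ = (k:ℝ) := by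
          rw [hθdef]; push_cast; field_simp
        rw [he, Real.rpow_natCast]
      have h2θ : (2:ℝ)^θ ≤ 2 := by
        calc (2:ℝ)^θ ≤ (2:ℝ)^(1:ℝ) := Real.rpow_le_rpow_of_exponent_le one_le_two hθ1
          _ = 2 := Real.rpow_one 2
      have hTxθ : Tx^θ ≤ 2*(2*B)^k := by
        calc Tx^θ ≤ (2*C)^θ := Real.rpow_le_rpow (by linarith) (by linarith) hθ0
          _ = 2^θ * C^θ := Real.mul_rpow (by norm_num) hCpos.le
          _ ≤ 2 * C^θ := mul_le_mul_of_nonneg_right h2θ (Real.rpow_nonneg hCpos.le θ)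
          _ = 2 * (2*B)^k := by rw [hCθ]
      calc mx ≤ B * Tx^θ * my := hroot
        _ ≤ B * (2*(2*B)^k) * my := by
            apply mul_le_mul_of_nonneg_right _ hmy.le
            exact mul_le_mul_of_nonneg_left hTxθ (by linarith)
        _ = C * my := by rw [hCdef, pow_succ']; ring
  · -- (ii) lower
    rw [Real.rpow_neg (by linarith : (0:ℝ) ≤ Tx), Real.rpow_natCast, le_div_iff₀ hmy]
    calc c * (Tx^k)⁻¹ * my ≤ c * (Tx^k)⁻¹ * (A * Tx^k * mx) := by
          apply mul_le_mul_of_nonneg_left hP2 (by positivity)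
      _ = (c*A) * mx * (Tx^k * (Tx^k)⁻¹) := by ring
      _ = (c*A) * mx := by rw [mul_inv_cancel₀ hTxk0.ne', mul_one]
      _ ≤ 1 * mx := mul_le_mul_of_nonneg_right hcA1 hmx.le
      _ = mx := one_mul mx
  · -- (ii) upper
    rw [div_le_iff₀ hmy]
    calc mx ≤ B * Tx^θ * my := hroot
      _ ≤ C * Tx^θ * my := by
          apply mul_le_mul_of_nonneg_right _ hmy.le
          exact mul_le_mul_of_nonneg_right hBC (Real.rpow_nonneg (by linarith) θ)
  · -- (iii) lower
    set θ' : ℝ := 1/((k:ℝ)+1) with hθ'def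
    have hθ'0 : 0 ≤ θ' := by positivity
    have hθ'1 : θ' ≤ 1 := by
      rw [hθ'def, div_le_one (by positivity)]; linarith
    have e2 : (Tx^(k+1)) ^ θ' = Tx := by
      rw [← Real.rpow_natCast Tx (k+1), ← Real.rpow_mul (by linarith : (0:ℝ) ≤ Tx)]
      have he : ((k+1:ℕ):ℝ) * θ' = 1 := by
        rw [hθ'def]; push_cast; field_simp
      rw [he, Real.rpow_one]
    have e3 : (1+A)^θ' ≤ 1+A := by
      calc (1+A)^θ' ≤ (1+A)^(1:ℝ) := Real.rpow_le_rpow_of_exponent_le (by linarith) hθ'1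
        _ = 1+A := Real.rpow_one _
    have hTyθ : Ty^θ' ≤ (1+A) * Tx := by
      calc Ty^θ' ≤ ((1+A) * Tx^(k+1))^θ' := Real.rpow_le_rpow (by linarith) hG3s hθ'0
        _ = (1+A)^θ' * (Tx^(k+1))^θ' := Real.mul_rpow (by linarith) (by positivity)
        _ ≤ (1+A) * Tx := by
            rw [e2]
            exact mul_le_mul_of_nonneg_right e3 hTx0.le
    calc c * Ty^θ' ≤ c * ((1+A) * Tx) := by
          apply mul_le_mul_of_nonneg_left hTyθ hcpos.le
      _ = (c * (1+A)) * Tx := by ring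
      _ ≤ 1 * Tx := mul_le_mul_of_nonneg_right hc1A hTx0.le
      _ = Tx := one_mul Tx
  · -- (iii) upper
    have he : Ty ^ ((k:ℝ)+1) = Ty^(k+1) := by
      rw [show ((k:ℝ)+1) = ((k+1:ℕ):ℝ) by push_cast; ring, Real.rpow_natCast]
    rw [he]
    calc Tx ≤ (1+A) * Ty^(k+1) := hG3
      _ ≤ C * Ty^(k+1) := mul_le_mul_of_nonneg_right h1AC (by positivity)
end
end
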